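/- arXiv:1909.07360 — 9 statements merged into one kernel-verified Lean document; each statement's English description precedes it below -/
import Mathlib

section
/- The subgroup of SL(2,ℤ) generated by the matrices A = [[1,2],[0,1]], B = [[1,0],[2,1]], and −I is isomorphic to the direct product F₂ × C₂ of a free group of rank 2 and a cyclic group of order 2. In particular, A and B freely generate a free subgroup of rank 2 not containing −I, and −I is central. -/
instance : Fact (Even (Fintype.card (Fin 2))) := ⟨by decide⟩


open Matrix

abbrev SL2 := Matrix.SpecialLinearGroup (Fin 2) ℤ


/-- Nonzero integer vectors in the plane. -/
def V : Type := {v : Fin 2 → ℤ // v ≠ 0}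

instance : SMul SL2 V :=
  ⟨fun g v => ⟨(g : Matrix (Fin 2) (Fin 2) ℤ).mulVec v.1, by
    intro h
    apply v.2
    have h2 : ((g⁻¹ : SL2) : Matrix (Fin 2) (Fin 2) ℤ).mulVec
        ((g : Matrix (Fin 2) (Fin 2) ℤ).mulVec v.1) = v.1 := by
      rw [Matrix.mulVec_mulVec, ← Matrix.SpecialLinearGroup.coe_mul, inv_mul_cancel,
        Matrix.SpecialLinearGroup.coe_one, Matrix.one_mulVec]
    rw [h, Matrix.mulVec_zero] at h2
    exact h2.symm⟩⟩

lemma V_smul_coe (g : SL2) (v : V) :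
    (g • v).1 = (g : Matrix (Fin 2) (Fin 2) ℤ).mulVec v.1 := rfl

instance : MulAction SL2 V where
  one_smul v := Subtype.ext (by
    rw [V_smul_coe, Matrix.SpecialLinearGroup.coe_one, Matrix.one_mulVec])
  mul_smul g h v := Subtype.ext (by
    simp only [V_smul_coe, Matrix.SpecialLinearGroup.coe_mul, Matrix.mulVec_mulVec])

lemma V_ne (v : V) : v.1 0 ≠ 0 ∨ v.1 1 ≠ 0 := by
  by_contra h
  push_neg at h
  exact v.2 (funext fun i => by fin_cases i <;> simp [h.1, h.2])

lemma smul_apply0 (g : SL2) (v : V) :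
    (g • v).1 0 = (g : Matrix (Fin 2) (Fin 2) ℤ) 0 0 * v.1 0
      + (g : Matrix (Fin 2) (Fin 2) ℤ) 0 1 * v.1 1 := by
  rw [V_smul_coe]
  simp [Matrix.mulVec, dotProduct, Fin.sum_univ_two]

lemma smul_apply1 (g : SL2) (v : V) :
    (g • v).1 1 = (g : Matrix (Fin 2) (Fin 2) ℤ) 1 0 * v.1 0
      + (g : Matrix (Fin 2) (Fin 2) ℤ) 1 1 * v.1 1 := by
  rw [V_smul_coe]
  simp [Matrix.mulVec, dotProduct, Fin.sum_univ_two]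

def XA : Set V := {v | (0 < v.1 1 ∧ v.1 1 < v.1 0) ∨ (v.1 1 < 0 ∧ v.1 0 < v.1 1)}
def XB : Set V := {v | (0 < v.1 0 ∧ v.1 0 ≤ v.1 1) ∨ (v.1 0 < 0 ∧ v.1 1 ≤ v.1 0)}
def YA : Set V := {v | (0 < v.1 0 ∧ -v.1 0 ≤ v.1 1 ∧ v.1 1 ≤ 0) ∨
  (v.1 0 < 0 ∧ 0 ≤ v.1 1 ∧ v.1 1 ≤ -v.1 0)}
def YB : Set V := {v | (0 < v.1 1 ∧ -v.1 1 < v.1 0 ∧ v.1 0 ≤ 0) ∨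
  (v.1 1 < 0 ∧ 0 ≤ v.1 0 ∧ v.1 0 < -v.1 1)}

section PingPong

variable {A B : SL2} (hA : (A : Matrix (Fin 2) (Fin 2) ℤ) = !![1, 2; 0, 1])
  (hB : (B : Matrix (Fin 2) (Fin 2) ℤ) = !![1, 0; 2, 1])

include hA in
lemma coe_A_inv : ((A⁻¹ : SL2) : Matrix (Fin 2) (Fin 2) ℤ) = !![1, -2; 0, 1] := by
  rw [Matrix.SpecialLinearGroup.SL2_inv_expl]
  ext i j
  fin_cases i <;> fin_cases j <;> simp [hA]

include hB in
lemma coe_B_inv : ((B⁻¹ : SL2) : Matrix (Fin 2) (Fin 2) ℤ) = !![1, 0; -2, 1] := by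
  rw [Matrix.SpecialLinearGroup.SL2_inv_expl]
  ext i j
  fin_cases i <;> fin_cases j <;> simp [hB]

set_option linter.unusedSectionVars false in
include hA hB in
lemma lift_injective :
    Function.Injective (FreeGroup.lift (fun i : Fin 2 => if i = 0 then A else B)) := by
  have hdisj : ∀ (S T : Set V),
      (∀ v : V, v ∈ S → v ∈ T → False) → Disjoint S T := by
    intro S T h
    rw [Set.disjoint_left]
    exact fun {v} hS hT => (h v hS hT).elim
  apply FreeGroup.injective_lift_of_ping_pong (fun i : Fin 2 => if i = 0 then A else B)
      (fun i : Fin 2 => if i = 0 then XA else XB) (fun i : Fin 2 => if i = 0 then YA else YB)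
  · -- nonempty
    intro i
    fin_cases i
    · exact ⟨⟨![2, 1], by intro h; simpa using congrFun h 0⟩, by
        simp only [reduceIte]; exact Or.inl ⟨by decide, by decide⟩⟩
    · exact ⟨⟨![1, 2], by intro h; simpa using congrFun h 0⟩, by
        simp only [Fin.zero_eta, Fin.mk_one, Fin.isValue, reduceIte, Fin.one_eq_zero_iff]; exact Or.inl ⟨by decide, by decide⟩⟩
  · -- X pairwise disjoint
    intro i j hij
    fin_cases i <;> fin_cases j <;> simp only [Function.onFun, Fin.zero_eta, Fin.mk_one] <;>
        first
        | (exact absurd rfl hij)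
        | (simp only [Fin.zero_eta, Fin.mk_one, Fin.isValue, reduceIte, show (1 : Fin 2) ≠ 0 by decide] <;>
            apply hdisj <;> intro v h1 h2 <;>
            simp only [XA, XB, Set.mem_setOf_eq] at h1 h2 <;> omega)
  · -- Y pairwise disjoint
    intro i j hij
    fin_cases i <;> fin_cases j <;> simp only [Function.onFun, Fin.zero_eta, Fin.mk_one] <;>
        first
        | (exact absurd rfl hij)
        | (simp only [Fin.zero_eta, Fin.mk_one, Fin.isValue, reduceIte, show (1 : Fin 2) ≠ 0 by decide] <;>
            apply hdisj <;> intro v h1 h2 <;>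
            simp only [YA, YB, Set.mem_setOf_eq] at h1 h2 <;> omega)
  · -- X vs Y disjoint
    intro i j
    fin_cases i <;> fin_cases j <;>
      simp only [Fin.zero_eta, Fin.mk_one, Fin.isValue, reduceIte, show (1 : Fin 2) ≠ 0 by decide] <;>
      apply hdisj <;> intro v h1 h2 <;>
      simp only [XA, XB, YA, YB, Set.mem_setOf_eq] at h1 h2 <;> omega
  · -- hX
    intro i
    fin_cases i <;>
      simp only [Fin.zero_eta, Fin.mk_one, Fin.isValue, reduceIte, show (1 : Fin 2) ≠ 0 by decide] <;>
      rintro - ⟨v, hv, rfl⟩ <;> have hne := V_ne v <;>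
      simp only [Set.mem_compl_iff, XA, XB, YA, YB, Set.mem_setOf_eq,
        smul_apply0, smul_apply1, hA, hB] at hv ⊢ <;>
      norm_num [Matrix.cons_val_zero, Matrix.cons_val_one, Matrix.head_cons] at hv ⊢ <;>
      omega
  · -- hY
    intro i
    fin_cases i <;>
      simp only [Fin.zero_eta, Fin.mk_one, Fin.isValue, Pi.inv_apply, reduceIte, show (1 : Fin 2) ≠ 0 by decide] <;>
      rintro - ⟨v, hv, rfl⟩ <;> have hne := V_ne v <;>
      simp only [Set.mem_compl_iff, XA, XB, YA, YB, Set.mem_setOf_eq,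
        smul_apply0, smul_apply1, coe_A_inv hA, coe_B_inv hB] at hv ⊢ <;>
      norm_num [Matrix.cons_val_zero, Matrix.cons_val_one, Matrix.head_cons] at hv ⊢ <;>
      omega

end PingPong

/-- The mod 4 invariant: diagonal entries `≡ 1 (mod 4)`, off-diagonal even. -/
def P (g : SL2) : Prop :=
  (((g : Matrix (Fin 2) (Fin 2) ℤ) 0 0 : ZMod 4) = 1) ∧
  (((g : Matrix (Fin 2) (Fin 2) ℤ) 1 1 : ZMod 4) = 1) ∧
  (((g : Matrix (Fin 2) (Fin 2) ℤ) 0 1 : ZMod 4) = 0 ∨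
    ((g : Matrix (Fin 2) (Fin 2) ℤ) 0 1 : ZMod 4) = 2) ∧
  (((g : Matrix (Fin 2) (Fin 2) ℤ) 1 0 : ZMod 4) = 0 ∨
    ((g : Matrix (Fin 2) (Fin 2) ℤ) 1 0 : ZMod 4) = 2)

lemma P_one : P 1 := by
  simp [P, Matrix.SpecialLinearGroup.coe_one, Matrix.one_apply]

lemma P_mul (g h : SL2) (hg : P g) (hh : P h) : P (g * h) := by
  obtain ⟨ha, hd, hb, hc⟩ := hg
  obtain ⟨ha', hd', hb', hc'⟩ := hh
  simp only [P, Matrix.SpecialLinearGroup.coe_mul, Matrix.mul_apply, Fin.sum_univ_two]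
  push_cast
  rcases hb with hb | hb <;> rcases hc with hc | hc <;>
    rcases hb' with hb' | hb' <;> rcases hc' with hc' | hc' <;>
    rw [ha, hd, ha', hd', hb, hc, hb', hc'] <;> decide

lemma P_inv (g : SL2) (hg : P g) : P g⁻¹ := by
  obtain ⟨ha, hd, hb, hc⟩ := hg
  rw [Matrix.SpecialLinearGroup.SL2_inv_expl]
  simp only [P]
  norm_num [Matrix.cons_val_zero, Matrix.cons_val_one, Matrix.head_cons]
  refine ⟨hd, ha, ?_, ?_⟩
  · rcases hb with hb | hb <;> rw [hb] <;> decide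
  · rcases hc with hc | hc <;> rw [hc] <;> decide

lemma P_neg_one : ¬ P (-1 : SL2) := by
  intro hP
  have h1 : ((-1 : SL2) : Matrix (Fin 2) (Fin 2) ℤ) 0 0 = -1 := by
    simp [Matrix.SpecialLinearGroup.coe_neg]
  have := hP.1
  rw [h1] at this
  push_cast at this
  exact absurd this (by decide)

section Main

variable {A B : SL2} (hA : (A : Matrix (Fin 2) (Fin 2) ℤ) = !![1, 2; 0, 1])
  (hB : (B : Matrix (Fin 2) (Fin 2) ℤ) = !![1, 0; 2, 1])

include hA in
lemma P_A : P A := by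
  simp only [P, hA]
  norm_num [Matrix.cons_val_zero, Matrix.cons_val_one, Matrix.head_cons]

include hB in
lemma P_B : P B := by
  simp only [P, hB]
  norm_num [Matrix.cons_val_zero, Matrix.cons_val_one, Matrix.head_cons]

include hA hB in
lemma neg_one_not_mem : (-1 : SL2) ∉ Subgroup.closure {A, B} := by
  intro h
  refine P_neg_one ?_
  refine Subgroup.closure_induction (p := fun g _ => P g) ?_ P_one
    (fun x y _ _ hx hy => P_mul x y hx hy) (fun x _ hx => P_inv x hx) h
  intro x hx
  rcases hx with rfl | rfl
  · exact P_A hA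
  · exact P_B hB

include hA hB in
lemma range_eq : Set.range (fun i : Fin 2 => if i = 0 then A else B) = {A, B} := by
  ext g
  constructor
  · rintro ⟨i, rfl⟩
    fin_cases i <;> simp
  · rintro (rfl | rfl)
    · exact ⟨0, by simp⟩
    · exact ⟨1, by norm_num⟩

include hA hB in
lemma lift_mem_closure (w : FreeGroup (Fin 2)) :
    FreeGroup.lift (fun i : Fin 2 => if i = 0 then A else B) w ∈ Subgroup.closure {A, B} := by
  have : FreeGroup.lift (fun i : Fin 2 => if i = 0 then A else B) w ∈
      (FreeGroup.lift (fun i : Fin 2 => if i = 0 then A else B)).range := ⟨w, rfl⟩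
  rwa [FreeGroup.range_lift_eq_closure, range_eq hA hB] at this

end Main

lemma neg_one_pow_mod (m : ℕ) : ((-1 : SL2)) ^ (m % 2) = (-1) ^ m := by
  conv_rhs => rw [← Nat.div_add_mod m 2]
  rw [pow_add, pow_mul, neg_one_sq, one_pow, one_mul]

/-- The homomorphism `F₂ × C₂ →* SL(2,ℤ)`. -/
def f (A B : SL2) : FreeGroup (Fin 2) × Multiplicative (ZMod 2) →* SL2 where
  toFun p := FreeGroup.lift (fun i : Fin 2 => if i = 0 then A else B) p.1 *
    (-1) ^ (Multiplicative.toAdd p.2).val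
  map_one' := by simp
  map_mul' p q := by
    obtain ⟨w₁, x₁⟩ := p
    obtain ⟨w₂, x₂⟩ := q
    simp only [Prod.fst_mul, Prod.snd_mul, _root_.map_mul, toAdd_mul, ZMod.val_add,
      neg_one_pow_mod, pow_add]
    have key : ∀ (u v : SL2) (a b : ℕ),
        u * v * ((-1) ^ a * (-1) ^ b) = u * (-1) ^ a * (v * (-1) ^ b) := by
      intro u v a b
      have c := (Commute.neg_one_left v).pow_left a
      simp only [← mul_assoc]
      rw [mul_assoc u, ← c.eq, ← mul_assoc]
    exact key _ _ _ _

lemma zmod2_cases (z : ZMod 2) : z = 0 ∨ z = 1 := by revert z; decide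

lemma neg_one_inv : ((-1 : SL2))⁻¹ = -1 :=
  inv_eq_of_mul_eq_one_right (by rw [neg_one_mul, neg_neg])

section Main2

variable {A B : SL2} (hA : (A : Matrix (Fin 2) (Fin 2) ℤ) = !![1, 2; 0, 1])
  (hB : (B : Matrix (Fin 2) (Fin 2) ℤ) = !![1, 0; 2, 1])

include hA hB in
lemma f_injective : Function.Injective (f A B) := by
  rw [injective_iff_map_eq_one]
  rintro ⟨w, x⟩ h
  simp only [f, MonoidHom.coe_mk, OneHom.coe_mk] at h
  rcases zmod2_cases (Multiplicative.toAdd x) with hv | hv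
  · rw [hv] at h
    simp only [ZMod.val_zero, pow_zero, mul_one] at h
    have hw : w = 1 := lift_injective hA hB (h.trans (_root_.map_one _).symm)
    have hx : x = 1 := by
      have : Multiplicative.toAdd x = Multiplicative.toAdd (1 : Multiplicative (ZMod 2)) := by
        rw [hv, toAdd_one]
      exact Multiplicative.toAdd.injective this
    rw [hw, hx]
    rfl
  · exfalso
    rw [hv] at h
    simp only [ZMod.val_one, pow_one] at h
    have hw : FreeGroup.lift (fun i : Fin 2 => if i = 0 then A else B) w = -1 := by
      rw [mul_eq_one_iff_eq_inv] at h
      rw [h, neg_one_inv]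
    exact neg_one_not_mem hA hB (hw ▸ lift_mem_closure hA hB w)

include hA hB in
lemma f_range : (f A B).range = Subgroup.closure {A, B, -1} := by
  apply le_antisymm
  · rintro g ⟨⟨w, x⟩, rfl⟩
    simp only [f, MonoidHom.coe_mk, OneHom.coe_mk]
    apply Subgroup.mul_mem
    · refine Subgroup.closure_mono ?_ (lift_mem_closure hA hB w)
      intro y hy
      simp only [Set.mem_insert_iff, Set.mem_singleton_iff] at hy ⊢
      tauto
    · exact Subgroup.pow_mem _ (Subgroup.subset_closure (by simp)) _
  · rw [Subgroup.closure_le]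
    intro g hg
    simp only [Set.mem_insert_iff, Set.mem_singleton_iff] at hg
    rcases hg with rfl | rfl | rfl
    · exact ⟨(FreeGroup.of 0, 1), by simp [f]⟩
    · exact ⟨(FreeGroup.of 1, 1), by simp [f]⟩
    · exact ⟨(1, Multiplicative.ofAdd 1), by simp [f, ZMod.val_one]⟩

end Main2


/-- The subgroup of `SL(2,ℤ)` generated by `A = [[1,2],[0,1]]`, `B = [[1,0],[2,1]]`
and `-I` is isomorphic to `F₂ × C₂`; moreover `A, B` freely generate a free subgroup
of rank 2 not containing `-I`, and `-I` is central. -/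
theorem stmt_3 (A B : Matrix.SpecialLinearGroup (Fin 2) ℤ)
    (hA : (A : Matrix (Fin 2) (Fin 2) ℤ) = !![1, 2; 0, 1])
    (hB : (B : Matrix (Fin 2) (Fin 2) ℤ) = !![1, 0; 2, 1]) :
    Nonempty ((Subgroup.closure {A, B, -1} : Subgroup (Matrix.SpecialLinearGroup (Fin 2) ℤ))
        ≃* FreeGroup (Fin 2) × Multiplicative (ZMod 2)) ∧
      Function.Injective (FreeGroup.lift (fun i : Fin 2 => if i = 0 then A else B)) ∧
      (-1 : Matrix.SpecialLinearGroup (Fin 2) ℤ) ∉ Subgroup.closure {A, B} ∧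
      ∀ g : Matrix.SpecialLinearGroup (Fin 2) ℤ, g * (-1) = (-1) * g := by
  refine ⟨?_, lift_injective hA hB, neg_one_not_mem hA hB,
    fun g => by rw [mul_neg_one, neg_one_mul]⟩
  exact ⟨(MulEquiv.subgroupCongr (f_range hA hB).symm).trans
    (MonoidHom.ofInjective (f_injective hA hB)).symm⟩
end

section
/- The matrices A = [[1,2],[0,1]] and B = [[1,0],[2,1]] generate a free group of rank 2 in SL(2,ℤ). -/
open Matrix

abbrev SanovSpace := {v : Fin 2 → ℤ // v ≠ 0}

instance : SMul (SpecialLinearGroup (Fin 2) ℤ) SanovSpace :=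
  ⟨fun g v => ⟨(g : Matrix (Fin 2) (Fin 2) ℤ) *ᵥ v.1, by
    intro h
    apply v.2
    have : (g⁻¹ : SpecialLinearGroup (Fin 2) ℤ).1 *ᵥ ((g : Matrix (Fin 2) (Fin 2) ℤ) *ᵥ v.1) = 0 := by
      rw [h]; simp
    rwa [Matrix.mulVec_mulVec, ← Matrix.SpecialLinearGroup.coe_mul, inv_mul_cancel,
      Matrix.SpecialLinearGroup.coe_one, Matrix.one_mulVec] at this⟩⟩

theorem sanov_smul_def (g : SpecialLinearGroup (Fin 2) ℤ) (v : SanovSpace) :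
    (g • v).1 = (g : Matrix (Fin 2) (Fin 2) ℤ) *ᵥ v.1 := rfl

instance : MulAction (SpecialLinearGroup (Fin 2) ℤ) SanovSpace where
  one_smul v := Subtype.ext (by rw [sanov_smul_def, Matrix.SpecialLinearGroup.coe_one,
    Matrix.one_mulVec])
  mul_smul g h v := Subtype.ext (by
    rw [sanov_smul_def, sanov_smul_def, sanov_smul_def, Matrix.SpecialLinearGroup.coe_mul,
      ← Matrix.mulVec_mulVec])

/-- Ping-pong sets `X`. -/
def sanovX : Fin 2 → Set SanovSpace := fun i =>
  if i = 0 then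
    {v | v.1 0 = v.1 1 ∨ (0 < v.1 1 ∧ v.1 1 < v.1 0) ∨ (v.1 0 < v.1 1 ∧ v.1 1 < 0)}
  else
    {v | (0 < v.1 0 ∧ v.1 0 < v.1 1) ∨ (v.1 1 < v.1 0 ∧ v.1 0 < 0)}

/-- Ping-pong sets `Y`. -/
def sanovY : Fin 2 → Set SanovSpace := fun i =>
  if i = 0 then
    {v | v.1 1 = 0 ∨ (v.1 1 < 0 ∧ 0 < v.1 0 ∧ -v.1 0 < v.1 1) ∨
      (0 < v.1 1 ∧ v.1 0 < 0 ∧ v.1 1 < -v.1 0)}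
  else
    {v | v.1 0 = 0 ∨ v.1 0 = -v.1 1 ∨ (v.1 0 < 0 ∧ 0 < v.1 1 ∧ -v.1 0 < v.1 1) ∨
      (0 < v.1 0 ∧ v.1 1 < 0 ∧ v.1 1 < -v.1 0)}

theorem sanov_ne (v : SanovSpace) : v.1 0 ≠ 0 ∨ v.1 1 ≠ 0 := by
  by_contra h
  push_neg at h
  exact v.2 (funext fun i => by fin_cases i <;> simp [h.1, h.2])

/-- Sanov: `A = [[1,2],[0,1]]` and `B = [[1,0],[2,1]]` freely generate a free
subgroup of rank 2 in `SL(2,ℤ)`. -/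
theorem stmt_4 (A B : Matrix.SpecialLinearGroup (Fin 2) ℤ)
    (hA : (A : Matrix (Fin 2) (Fin 2) ℤ) = !![1, 2; 0, 1])
    (hB : (B : Matrix (Fin 2) (Fin 2) ℤ) = !![1, 0; 2, 1]) :
    Function.Injective (FreeGroup.lift (fun i : Fin 2 => if i = 0 then A else B)) := by
  have hAinv : ((A⁻¹ : Matrix.SpecialLinearGroup (Fin 2) ℤ) : Matrix (Fin 2) (Fin 2) ℤ)
      = !![1, -2; 0, 1] := by
    rw [Matrix.SpecialLinearGroup.SL2_inv_expl]
    ext i j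
    fin_cases i <;> fin_cases j <;> simp [hA]
  have hBinv : ((B⁻¹ : Matrix.SpecialLinearGroup (Fin 2) ℤ) : Matrix (Fin 2) (Fin 2) ℤ)
      = !![1, 0; -2, 1] := by
    rw [Matrix.SpecialLinearGroup.SL2_inv_expl]
    ext i j
    fin_cases i <;> fin_cases j <;> simp [hB]
  have key : ∀ (M : Matrix.SpecialLinearGroup (Fin 2) ℤ) (a b c d : ℤ),
      (M : Matrix (Fin 2) (Fin 2) ℤ) = !![a, b; c, d] → ∀ v : SanovSpace,
      (M • v).1 0 = a * v.1 0 + b * v.1 1 ∧ (M • v).1 1 = c * v.1 0 + d * v.1 1 := by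
    intro M a b c d hM v
    constructor <;>
      simp [sanov_smul_def, hM, Matrix.mulVec, dotProduct, Fin.sum_univ_two]
  apply FreeGroup.injective_lift_of_ping_pong _ sanovX sanovY
  · -- nonempty
    intro i
    fin_cases i
    · exact ⟨⟨![2, 1], by intro h; simpa using congrFun h 0⟩, by simp [sanovX]⟩
    · exact ⟨⟨![1, 2], by intro h; simpa using congrFun h 0⟩, by simp [sanovX]⟩
  · -- X pairwise disjoint
    intro i j hij
    fin_cases i <;> fin_cases j <;> simp_all <;>
      · simp only [Function.onFun]
        rw [Set.disjoint_left]
        intro v hv hv'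
        have := sanov_ne v
        simp [sanovX] at hv hv'
        omega
  · -- Y pairwise disjoint
    intro i j hij
    fin_cases i <;> fin_cases j <;> simp_all <;>
      · simp only [Function.onFun]
        rw [Set.disjoint_left]
        intro v hv hv'
        have := sanov_ne v
        simp [sanovY] at hv hv'
        omega
  · -- X i disjoint Y j
    intro i j
    fin_cases i <;> fin_cases j <;>
      · rw [Set.disjoint_left]
        intro v hv hv'
        have := sanov_ne v
        simp [sanovX, sanovY] at hv hv'
        omega
  · -- hX
    intro i
    have hi : i = 0 ∨ i = 1 := by omega
    rcases hi with rfl | rfl <;> intro z hz <;> obtain ⟨v, hv, rfl⟩ := hz <;>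
      simp only [Set.mem_compl_iff] at hv
    · obtain ⟨h0, h1⟩ := key A 1 2 0 1 hA v
      have := sanov_ne v
      show (if (0:Fin 2) = 0 then A else B) • v ∈ sanovX 0
      rw [if_pos rfl]
      simp only [sanovX, sanovY, if_pos rfl, eq_self_iff_true, if_true, Set.mem_setOf_eq] at hv ⊢
      rw [h0, h1]
      push_neg at hv
      omega
    · obtain ⟨h0, h1⟩ := key B 1 0 2 1 hB v
      have := sanov_ne v
      show (if (1:Fin 2) = 0 then A else B) • v ∈ sanovX 1
      rw [if_neg (by decide)]
      simp only [sanovX, sanovY, if_neg (by decide : ¬(1:Fin 2) = 0),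
        Set.mem_setOf_eq] at hv ⊢
      rw [h0, h1]
      push_neg at hv
      omega
  · -- hY
    intro i
    have hi : i = 0 ∨ i = 1 := by omega
    rcases hi with rfl | rfl <;> intro z hz <;> obtain ⟨v, hv, rfl⟩ := hz <;>
      simp only [Set.mem_compl_iff] at hv
    · obtain ⟨h0, h1⟩ := key A⁻¹ 1 (-2) 0 1 hAinv v
      have := sanov_ne v
      show ((fun i : Fin 2 => if i = 0 then A else B)⁻¹ 0) • v ∈ sanovY 0
      show (if (0:Fin 2) = 0 then A else B)⁻¹ • v ∈ sanovY 0
      rw [if_pos rfl]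
      simp only [sanovX, sanovY, if_pos rfl, eq_self_iff_true, if_true, Set.mem_setOf_eq] at hv ⊢
      rw [h0, h1]
      push_neg at hv
      omega
    · obtain ⟨h0, h1⟩ := key B⁻¹ 1 0 (-2) 1 hBinv v
      have := sanov_ne v
      show ((fun i : Fin 2 => if i = 0 then A else B)⁻¹ 1) • v ∈ sanovY 1
      show (if (1:Fin 2) = 0 then A else B)⁻¹ • v ∈ sanovY 1
      rw [if_neg (by decide)]
      simp only [sanovX, sanovY, if_neg (by decide : ¬(1:Fin 2) = 0),
        Set.mem_setOf_eq] at hv ⊢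
      rw [h0, h1]
      push_neg at hv
      omega
end

section
/- Let G be the subgroup of SL(2,ℤ) generated by T_x = [[1,1],[0,1]] and the transvection T_y along the primitive vector y = (1,2) (so T_y acts by v ↦ v + ⟨y,v⟩y). Then the orbit of the set of primitive vectors with even second coordinate under G is exactly the set of primitive vectors in ℤ² with even second coordinate; that is, for every primitive vector (a,b) with b even, T_{(a,b)} lies in G, and conversely every transvection in G is along a primitive vector with even second coordinate. -/
/-- The transvection (Dehn twist matrix) along `c = (c₁, c₂)`. -/
def transvection (c : ℤ × ℤ) : Matrix.SpecialLinearGroup (Fin 2) ℤ :=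
  ⟨!![1 - c.1 * c.2, c.1 ^ 2; -c.2 ^ 2, 1 + c.1 * c.2], by
    rw [Matrix.det_fin_two_of]; ring⟩

namespace Stmt5aux

abbrev G : Subgroup (Matrix.SpecialLinearGroup (Fin 2) ℤ) :=
  Subgroup.closure {transvection (1, 0), transvection (1, 2)}

lemma neg_eq (a b : ℤ) : transvection (-a, -b) = transvection (a, b) := by
  apply Subtype.ext; simp [transvection]

lemma hS : transvection (1, 0) ∈ G := Subgroup.subset_closure (Or.inl rfl)
lemma hU : transvection (1, 2) ∈ G := Subgroup.subset_closure (Or.inr rfl)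

lemma conj_iff {t t' x : Matrix.SpecialLinearGroup (Fin 2) ℤ} (hx : x ∈ G)
    (h : t' * x = x * t) : t ∈ G ↔ t' ∈ G := by
  constructor
  · intro ht
    have : t' = x * t * x⁻¹ := by rw [← h]; group
    rw [this]; exact mul_mem (mul_mem hx ht) (inv_mem hx)
  · intro ht
    have : t = x⁻¹ * t' * x := by rw [mul_assoc, h]; group
    rw [this]; exact mul_mem (mul_mem (inv_mem hx) ht) hx

lemma moveA (a b : ℤ) : transvection (a, b) ∈ G ↔ transvection (a + b, b) ∈ G := by
  apply conj_iff hS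
  apply Subtype.ext
  show _ * _ = _ * _
  ext i j
  fin_cases i <;> fin_cases j <;>
    simp [transvection, Matrix.mul_apply, Fin.sum_univ_two] <;> ring

def P : Matrix.SpecialLinearGroup (Fin 2) ℤ :=
  ⟨!![-1, 0; -4, -1], by rw [Matrix.det_fin_two_of]; ring⟩

lemma hP : P ∈ G := by
  have : P = transvection (1, 2) * transvection (1, 0) := by
    apply Subtype.ext
    show _ = _ * _
    ext i j
    fin_cases i <;> fin_cases j <;>
      simp [transvection, P, Matrix.mul_apply, Fin.sum_univ_two]
  rw [this]; exact mul_mem hU hS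

lemma moveB (a b : ℤ) : transvection (a, b) ∈ G ↔ transvection (a, 4 * a + b) ∈ G := by
  apply conj_iff hP
  apply Subtype.ext
  show _ * _ = _ * _
  ext i j
  fin_cases i <;> fin_cases j <;>
    simp [transvection, P, Matrix.mul_apply, Fin.sum_univ_two] <;> ring

lemma key : ∀ n : ℕ, ∀ a b : ℤ, a.natAbs + b.natAbs ≤ n → IsCoprime a b → Even b →
    transvection (a, b) ∈ G := by
  intro n
  induction n with
  | zero =>
    intro a b hn hco _
    have ha : a = 0 := by omega
    have hb : b = 0 := by omega
    subst ha; subst hb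
    exact absurd hco (not_isCoprime_zero_zero)
  | succ n ih =>
    intro a b hn hco hb
    by_cases hb0 : b = 0
    · subst hb0
      rcases Int.isUnit_iff.mp (isCoprime_zero_right.mp hco) with rfl | rfl
      · exact hS
      · have h := neg_eq 1 0
        norm_num at h
        rw [h]; exact hS
    · have ha0 : a ≠ 0 := by
        rintro rfl
        rcases Int.isUnit_iff.mp (isCoprime_zero_left.mp hco) with rfl | rfl <;>
          · obtain ⟨k, hk⟩ := hb; omega
      by_cases hcase : b.natAbs < 2 * a.natAbs
      · -- reduce a
        by_cases hsgn : 0 < a * b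
        · have hlt : (a - b).natAbs < a.natAbs := by
            rcases mul_pos_iff.mp hsgn with ⟨h1, h2⟩ | ⟨h1, h2⟩ <;> omega
          have hco' : IsCoprime (a - b) b := by
            have := hco.add_mul_left_left (-1)
            rwa [show a + b * -1 = a - b by ring] at this
          have hmem := ih (a - b) b (by omega) hco' hb
          have h2 := (moveA (a - b) b).mp hmem
          rwa [show a - b + b = a by ring] at h2
        · have hsgn' : a * b < 0 :=
            lt_of_le_of_ne (not_lt.mp hsgn) (mul_ne_zero ha0 hb0)
          have hlt : (a + b).natAbs < a.natAbs := by
            rcases mul_neg_iff.mp hsgn' with ⟨h1, h2⟩ | ⟨h1, h2⟩ <;> omega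
          have hco' : IsCoprime (a + b) b := by
            have := hco.add_mul_left_left 1
            rwa [show a + b * 1 = a + b by ring] at this
          have hmem := ih (a + b) b (by omega) hco' hb
          exact (moveA a b).mpr hmem
      · by_cases heq : b.natAbs = 2 * a.natAbs
        · -- b = ±2a, so a = ±1
          have hdvd : a ∣ b := by
            have : b = 2 * a ∨ b = -(2 * a) := by omega
            rcases this with rfl | rfl
            · exact ⟨2, by ring⟩
            · exact ⟨-2, by ring⟩
          have := Int.isUnit_iff.mp (hco.isUnit_of_dvd' dvd_rfl hdvd)
          have hb2 : b = 2 * a ∨ b = -(2 * a) := by omega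
          rcases this with rfl | rfl <;> rcases hb2 with rfl | rfl <;> norm_num
          · exact hU
          · have := (moveB 1 (-2))
            norm_num at this
            exact this.mpr hU
          · have h := neg_eq 1 2
            norm_num at h
            rw [h]; exact hU
          · have h := neg_eq 1 (-2)
            norm_num at h
            rw [h]
            have := (moveB 1 (-2))
            norm_num at this
            exact this.mpr hU
        · -- |b| > 2|a| : reduce b
          by_cases hsgn : 0 < a * b
          · have hlt : (b - 4 * a).natAbs < b.natAbs := by
              rcases mul_pos_iff.mp hsgn with ⟨h1, h2⟩ | ⟨h1, h2⟩ <;> omega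
            have hco' : IsCoprime a (b - 4 * a) := by
              have := hco.add_mul_left_right (-4)
              rwa [show b + a * -4 = b - 4 * a by ring] at this
            have hb' : Even (b - 4 * a) := by
              obtain ⟨k, hk⟩ := hb; exact ⟨k - 2 * a, by omega⟩
            have hmem := ih a (b - 4 * a) (by omega) hco' hb'
            have h2 := (moveB a (b - 4 * a)).mp hmem
            rwa [show 4 * a + (b - 4 * a) = b by ring] at h2
          · have hsgn' : a * b < 0 :=
              lt_of_le_of_ne (not_lt.mp hsgn) (mul_ne_zero ha0 hb0)
            have hlt : (b + 4 * a).natAbs < b.natAbs := by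
              rcases mul_neg_iff.mp hsgn' with ⟨h1, h2⟩ | ⟨h1, h2⟩ <;> omega
            have hco' : IsCoprime a (b + 4 * a) := by
              have := hco.add_mul_left_right 4
              rwa [show b + a * 4 = b + 4 * a by ring] at this
            have hb' : Even (b + 4 * a) := by
              obtain ⟨k, hk⟩ := hb; exact ⟨k + 2 * a, by omega⟩
            have hmem := ih a (b + 4 * a) (by omega) hco' hb'
            rw [show b + 4 * a = 4 * a + b by ring] at hmem
            exact (moveB a b).mpr hmem

def H : Subgroup (Matrix.SpecialLinearGroup (Fin 2) ℤ) where
  carrier := {M | Even ((M : Matrix (Fin 2) (Fin 2) ℤ) 1 0)}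
  one_mem' := by simp
  mul_mem' := by
    intro A B hA hB
    simp only [Set.mem_setOf_eq, Matrix.SpecialLinearGroup.coe_mul] at *
    rw [Matrix.mul_apply, Fin.sum_univ_two]
    exact Even.add (hA.mul_right _) (hB.mul_left _)
  inv_mem' := by
    intro A hA
    simp only [Set.mem_setOf_eq] at *
    rw [Matrix.SpecialLinearGroup.coe_inv, Matrix.adjugate_fin_two]
    simpa using hA

lemma even_of_mem {a b : ℤ} (h : transvection (a, b) ∈ G) : Even b := by
  have hle : G ≤ H := by
    rw [Subgroup.closure_le]
    rintro x (rfl | rfl) <;> simp [H, transvection] <;> show Even _ <;> decide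
  have := hle h
  simp only [H, Subgroup.mem_mk, Set.mem_setOf_eq, transvection] at this
  have h2 : Even (b ^ 2) := by simpa using this.neg
  exact (Int.even_pow.mp h2).1

end Stmt5aux

/-- Claim 7.2 (first part): with `G = ⟨T_{(1,0)}, T_{(1,2)}⟩`, a transvection along a
primitive vector `(a,b)` lies in `G` if and only if `b` is even. -/
theorem stmt_5 :
    ∀ a b : ℤ, IsCoprime a b →
      (transvection (a, b) ∈ Subgroup.closure {transvection (1, 0), transvection (1, 2)}
        ↔ Even b) := by
  intro a b hco
  constructor
  · exact Stmt5aux.even_of_mem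
  · intro hb
    exact Stmt5aux.key (a.natAbs + b.natAbs) a b le_rfl hco hb
end

section
/- Let G be the subgroup of SL(2,ℤ) generated by the squares of the transvections along (1,0) and (0,1), i.e., G = ⟨[[1,2],[0,1]], [[1,0],[-2,1]]⟩. Then for every primitive vector (a,b) ∈ ℤ² with a+b odd, the square of the transvection along (a,b) lies in G. -/
/-- Claim 7.4 (inclusion): every square of a transvection along a primitive vector
`(a,b)` with `a + b` odd lies in `⟨T_{(1,0)}², T_{(0,1)}²⟩ = ⟨[[1,2],[0,1]], [[1,0],[-2,1]]⟩`. -/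
theorem stmt_6 (A B : Matrix.SpecialLinearGroup (Fin 2) ℤ)
    (hA : (A : Matrix (Fin 2) (Fin 2) ℤ) = !![1, 2; 0, 1])
    (hB : (B : Matrix (Fin 2) (Fin 2) ℤ) = !![1, 0; -2, 1]) :
    ∀ a b : ℤ, IsCoprime a b → Odd (a + b) →
      (transvection (a, b)) ^ 2 ∈ Subgroup.closure {A, B} := by
  have keyA : ∀ a b : ℤ, A * (transvection (a, b)) ^ 2
      = (transvection (a + 2*b, b)) ^ 2 * A := by
    intro a b
    apply Subtype.ext
    simp only [Matrix.SpecialLinearGroup.coe_mul, pow_two, hA]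
    simp only [transvection]
    ext i j
    fin_cases i <;> fin_cases j <;>
      simp [Matrix.mul_apply, Fin.sum_univ_two] <;> ring
  have keyB : ∀ a b : ℤ, B * (transvection (a, b)) ^ 2
      = (transvection (a, b - 2*a)) ^ 2 * B := by
    intro a b
    apply Subtype.ext
    simp only [Matrix.SpecialLinearGroup.coe_mul, pow_two, hB]
    simp only [transvection]
    ext i j
    fin_cases i <;> fin_cases j <;>
      simp [Matrix.mul_apply, Fin.sum_univ_two] <;> ring
  have hAmem : A ∈ Subgroup.closure {A, B} := Subgroup.subset_closure (by simp)
  have hBmem : B ∈ Subgroup.closure {A, B} := Subgroup.subset_closure (by simp)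
  suffices H : ∀ n : ℕ, ∀ a b : ℤ, a.natAbs + b.natAbs = n → IsCoprime a b →
      Odd (a + b) → (transvection (a, b)) ^ 2 ∈ Subgroup.closure {A, B} by
    intro a b hc ho; exact H _ a b rfl hc ho
  intro n
  induction n using Nat.strong_induction_on with
  | _ n ih =>
    intro a b hn hcop hodd
    rcases eq_or_ne b 0 with hb | hb
    · subst hb
      have ha : a = 1 ∨ a = -1 := by
        have hg : Int.gcd a 0 = 1 := Int.isCoprime_iff_gcd_eq_one.mp hcop
        simp [Int.gcd] at hg
        omega
      have hTA : (transvection (a, 0)) ^ 2 = A := by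
        apply Subtype.ext
        rw [pow_two, Matrix.SpecialLinearGroup.coe_mul]
        rcases ha with h | h <;> subst h <;>
          simp [transvection, pow_two, hA, Matrix.SpecialLinearGroup.coe_mul] <;>
          ext i j <;> fin_cases i <;> fin_cases j <;>
          simp [Matrix.mul_apply, Fin.sum_univ_two]
      rw [hTA]; exact hAmem
    rcases eq_or_ne a 0 with ha | ha
    · subst ha
      have hb1 : b = 1 ∨ b = -1 := by
        have hg : Int.gcd 0 b = 1 := Int.isCoprime_iff_gcd_eq_one.mp hcop
        simp [Int.gcd] at hg
        omega
      have hTB : (transvection (0, b)) ^ 2 = B := by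
        apply Subtype.ext
        rw [pow_two, Matrix.SpecialLinearGroup.coe_mul]
        rcases hb1 with h | h <;> subst h <;>
          simp [transvection, pow_two, hB, Matrix.SpecialLinearGroup.coe_mul] <;>
          ext i j <;> fin_cases i <;> fin_cases j <;>
          simp [Matrix.mul_apply, Fin.sum_univ_two]
      rw [hTB]; exact hBmem
    -- both nonzero
    have hodd' := Int.odd_iff.mp hodd
    have hne : a.natAbs ≠ b.natAbs := by
      intro h
      have hg : Int.gcd a b = 1 := Int.isCoprime_iff_gcd_eq_one.mp hcop
      have hd : a.natAbs ∣ Int.gcd a b := Nat.dvd_gcd dvd_rfl (h ▸ dvd_rfl)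
      have h1 : a.natAbs = 1 := Nat.dvd_one.mp (hg ▸ hd)
      omega
    rcases lt_or_gt_of_ne hne with hlt | hlt
    · -- |a| < |b| : reduce b
      have hchoice : (b + 2*a).natAbs < b.natAbs ∨ (b - 2*a).natAbs < b.natAbs := by
        omega
      rcases hchoice with hc | hc
      · -- T(a,b)^2 = B * T(a, b+2a)^2 * B⁻¹, using keyB at (a, b+2a)
        have hco : IsCoprime a (b + 2*a) := by
          have h := hcop.add_mul_left_right 2
          have e : b + a * 2 = b + 2*a := by ring
          rwa [e] at h
        have hod : Odd (a + (b + 2*a)) := by rw [Int.odd_iff] at *; omega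
        have hmem := ih (a.natAbs + (b+2*a).natAbs) (by omega) a (b+2*a) rfl hco hod
        have heq : (transvection (a, b)) ^ 2
            = B * (transvection (a, b + 2*a)) ^ 2 * B⁻¹ := by
          have := keyB a (b + 2*a)
          have h2 : b + 2*a - 2*a = b := by ring
          rw [h2] at this
          rw [this]; group
        rw [heq]
        exact Subgroup.mul_mem _ (Subgroup.mul_mem _ hBmem hmem) (Subgroup.inv_mem _ hBmem)
      · have hco : IsCoprime a (b - 2*a) := by
          have h := hcop.add_mul_left_right (-2)
          rwa [show b + a * -2 = b - 2*a from by ring] at h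
        have hod : Odd (a + (b - 2*a)) := by rw [Int.odd_iff] at *; omega
        have hmem := ih (a.natAbs + (b-2*a).natAbs) (by omega) a (b-2*a) rfl hco hod
        have heq : (transvection (a, b)) ^ 2
            = B⁻¹ * (transvection (a, b - 2*a)) ^ 2 * B := by
          have := keyB a b
          apply mul_left_cancel (a := B)
          rw [this]; group
        rw [heq]
        exact Subgroup.mul_mem _ (Subgroup.mul_mem _ (Subgroup.inv_mem _ hBmem) hmem) hBmem
    · -- |b| < |a| : reduce a
      have hchoice : (a + 2*b).natAbs < a.natAbs ∨ (a - 2*b).natAbs < a.natAbs := by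
        omega
      rcases hchoice with hc | hc
      · have hco : IsCoprime (a + 2*b) b := by
          have h := hcop.add_mul_left_left 2
          rwa [show a + b * 2 = a + 2*b from by ring] at h
        have hod : Odd ((a + 2*b) + b) := by rw [Int.odd_iff] at *; omega
        have hmem := ih ((a+2*b).natAbs + b.natAbs) (by omega) (a+2*b) b rfl hco hod
        have heq : (transvection (a, b)) ^ 2
            = A⁻¹ * (transvection (a + 2*b, b)) ^ 2 * A := by
          have := keyA a b
          apply mul_left_cancel (a := A)
          rw [this]; group
        rw [heq]
        exact Subgroup.mul_mem _ (Subgroup.mul_mem _ (Subgroup.inv_mem _ hAmem) hmem) hAmem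
      · have hco : IsCoprime (a - 2*b) b := by
          have h := hcop.add_mul_left_left (-2)
          rwa [show a + b * -2 = a - 2*b from by ring] at h
        have hod : Odd ((a - 2*b) + b) := by rw [Int.odd_iff] at *; omega
        have hmem := ih ((a-2*b).natAbs + b.natAbs) (by omega) (a-2*b) b rfl hco hod
        have heq : (transvection (a, b)) ^ 2
            = A * (transvection (a - 2*b, b)) ^ 2 * A⁻¹ := by
          have := keyA (a - 2*b) b
          have h2 : a - 2*b + 2*b = a := by ring
          rw [h2] at this
          rw [this]; group
        rw [heq]
        exact Subgroup.mul_mem _ (Subgroup.mul_mem _ hAmem hmem) (Subgroup.inv_mem _ hAmem)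
end

section
/- Every primitive vector (a,b) ∈ ℤ² with a+b odd can be reduced to one of ±(1,0) or ±(0,1) by repeatedly applying the matrices [[1,2],[0,1]]^{±1} and [[1,0],[2,1]]^{±1}; the reduction strictly decreases max(|a|,|b|) at each nontrivial step. Formally: for every primitive (a,b) with a+b odd, there is an element g of the subgroup generated by [[1,2],[0,1]] and [[1,0],[2,1]] with g·(a,b) ∈ {(1,0),(−1,0),(0,1),(0,−1)}. -/
lemma mulVec_fin_two' (p q r s a b : ℤ) :
    (!![p,q;r,s]).mulVec ![a,b] = ![p*a+q*b, r*a+s*b] := by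
  funext i; fin_cases i <;> simp [Matrix.mulVec, dotProduct, Fin.sum_univ_two]

/-- Every primitive vector `(a,b)` with `a+b` odd can be moved to one of
`±(1,0), ±(0,1)` by an element of the subgroup generated by `[[1,2],[0,1]]`
and `[[1,0],[2,1]]`. -/
theorem stmt_7 (A B : Matrix.SpecialLinearGroup (Fin 2) ℤ)
    (hA : (A : Matrix (Fin 2) (Fin 2) ℤ) = !![1, 2; 0, 1])
    (hB : (B : Matrix (Fin 2) (Fin 2) ℤ) = !![1, 0; 2, 1]) :
    ∀ a b : ℤ, IsCoprime a b → Odd (a + b) →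
      ∃ g ∈ Subgroup.closure {A, B},
        (g : Matrix (Fin 2) (Fin 2) ℤ).mulVec ![a, b]
          ∈ ({![1, 0], ![-1, 0], ![0, 1], ![0, -1]} : Set (Fin 2 → ℤ)) := by
  have hAmem : A ∈ Subgroup.closure {A, B} := Subgroup.subset_closure (by simp)
  have hBmem : B ∈ Subgroup.closure {A, B} := Subgroup.subset_closure (by simp)
  have hAinv : ((A⁻¹ : Matrix.SpecialLinearGroup (Fin 2) ℤ) : Matrix (Fin 2) (Fin 2) ℤ)
      = !![1, -2; 0, 1] := by
    rw [Matrix.SpecialLinearGroup.coe_inv, hA, Matrix.adjugate_fin_two]; simp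
  have hBinv : ((B⁻¹ : Matrix.SpecialLinearGroup (Fin 2) ℤ) : Matrix (Fin 2) (Fin 2) ℤ)
      = !![1, 0; -2, 1] := by
    rw [Matrix.SpecialLinearGroup.coe_inv, hB, Matrix.adjugate_fin_two]; simp
  -- a step lemma: if M is in the closure and M ⬝ (a,b) = (a',b') and the result
  -- holds for (a',b'), it holds for (a,b).
  have step : ∀ (M : Matrix.SpecialLinearGroup (Fin 2) ℤ), M ∈ Subgroup.closure {A, B} →
      ∀ a b a' b' : ℤ, (M : Matrix (Fin 2) (Fin 2) ℤ).mulVec ![a, b] = ![a', b'] →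
      (∃ g ∈ Subgroup.closure {A, B},
        (g : Matrix (Fin 2) (Fin 2) ℤ).mulVec ![a', b']
          ∈ ({![1, 0], ![-1, 0], ![0, 1], ![0, -1]} : Set (Fin 2 → ℤ))) →
      (∃ g ∈ Subgroup.closure {A, B},
        (g : Matrix (Fin 2) (Fin 2) ℤ).mulVec ![a, b]
          ∈ ({![1, 0], ![-1, 0], ![0, 1], ![0, -1]} : Set (Fin 2 → ℤ))) := by
    intro M hM a b a' b' hMv ⟨g, hg, hres⟩
    refine ⟨g * M, mul_mem hg hM, ?_⟩
    rw [Matrix.SpecialLinearGroup.coe_mul, ← Matrix.mulVec_mulVec, hMv]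
    exact hres
  have key : ∀ n : ℕ, ∀ a b : ℤ, a.natAbs + b.natAbs ≤ n → IsCoprime a b → Odd (a + b) →
      ∃ g ∈ Subgroup.closure {A, B},
        (g : Matrix (Fin 2) (Fin 2) ℤ).mulVec ![a, b]
          ∈ ({![1, 0], ![-1, 0], ![0, 1], ![0, -1]} : Set (Fin 2 → ℤ)) := by
    intro n
    induction n with
    | zero =>
      intro a b hn _ hodd
      rw [Int.odd_iff] at hodd
      omega
    | succ n ih =>
      intro a b hn hcop hodd
      have hodd' := Int.odd_iff.mp hodd
      by_cases hb : b = 0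
      · subst hb
        have ha : a = 1 ∨ a = -1 := by
          have := hcop.isUnit_of_dvd' dvd_rfl (dvd_zero a)
          rw [Int.isUnit_iff] at this
          tauto
        refine ⟨1, one_mem _, ?_⟩
        rw [Matrix.SpecialLinearGroup.coe_one, Matrix.one_mulVec]
        rcases ha with h | h <;> subst h <;> simp
      by_cases ha : a = 0
      · subst ha
        have hbu : b = 1 ∨ b = -1 := by
          have := hcop.isUnit_of_dvd' (dvd_zero b) dvd_rfl
          rw [Int.isUnit_iff] at this
          tauto
        refine ⟨1, one_mem _, ?_⟩
        rw [Matrix.SpecialLinearGroup.coe_one, Matrix.one_mulVec]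
        rcases hbu with h | h <;> subst h <;> simp
      -- both nonzero; |a| ≠ |b| since a+b is odd
      have hne : a.natAbs ≠ b.natAbs := by omega
      rcases lt_or_gt_of_ne hne with hlt | hgt
      · -- |a| < |b| : use B or B⁻¹ to shrink b
        have hcase : (2*a + b).natAbs < b.natAbs ∨ (-2*a + b).natAbs < b.natAbs := by omega
        rcases hcase with h | h
        · refine step B hBmem a b a (2*a + b) (by rw [hB, mulVec_fin_two']; ring_nf) ?_
          refine ih a (2*a+b) (by omega) ?_ (by rw [Int.odd_iff] at *; omega)
          simpa [mul_comm, add_comm] using hcop.add_mul_left_right 2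
        · refine step B⁻¹ (inv_mem hBmem) a b a (-2*a + b)
            (by rw [hBinv, mulVec_fin_two']; ring_nf) ?_
          refine ih a (-2*a+b) (by omega) ?_ (by rw [Int.odd_iff] at *; omega)
          simpa [mul_comm, add_comm] using hcop.add_mul_left_right (-2)
      · -- |a| > |b| : use A or A⁻¹ to shrink a
        have hcase : (a + 2*b).natAbs < a.natAbs ∨ (a + -2*b).natAbs < a.natAbs := by omega
        rcases hcase with h | h
        · refine step A hAmem a b (a + 2*b) b (by rw [hA, mulVec_fin_two']; ring_nf) ?_
          refine ih (a+2*b) b (by omega) ?_ (by rw [Int.odd_iff] at *; omega)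
          simpa [mul_comm] using hcop.add_mul_left_left 2
        · refine step A⁻¹ (inv_mem hAmem) a b (a + -2*b) b
            (by rw [hAinv, mulVec_fin_two']; ring_nf) ?_
          refine ih (a + -2*b) b (by omega) ?_ (by rw [Int.odd_iff] at *; omega)
          simpa [mul_comm] using hcop.add_mul_left_left (-2)
  intro a b hcop hodd
  exact key (a.natAbs + b.natAbs) a b le_rfl hcop hodd
end

section
/- The subgroup of SL(2,ℤ) generated by all squares of transvections along primitive vectors equals the subgroup generated by the three matrices [[1,2],[0,1]], [[1,0],[-2,1]], and the square of the transvection along (1,1), and this subgroup is isomorphic to F₂ × C₂. -/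
open Pointwise Matrix Monoid.CoprodI

namespace Stmt11Aux

/- ### Generic ping-pong lemma for powers -/

lemma pingpong {ι : Type} [Nontrivial ι] {G : Type*} [Group G] (a : ι → G)
    {α : Type*} [MulAction G α] (X : ι → Set α)
    (hXnonempty : ∀ i, (X i).Nonempty)
    (hXdisj : Pairwise (Function.onFun Disjoint X))
    (hpow : ∀ i j, i ≠ j → ∀ n : ℤ, n ≠ 0 → (a i ^ n) • X j ⊆ X i) :
    Function.Injective (FreeGroup.lift a) := by
  have : FreeGroup.lift a =
      (Monoid.CoprodI.lift fun i => FreeGroup.lift fun _ => a i).comp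
        (@freeGroupEquivCoprodI ι).toMonoidHom := by
    ext i
    simp
  rw [this, MonoidHom.coe_comp]
  refine Function.Injective.comp ?_ (MulEquiv.injective freeGroupEquivCoprodI)
  let f : ∀ _ : ι, FreeGroup Unit →* G := fun i => FreeGroup.lift fun _ => a i
  have hcard : 3 ≤ Cardinal.mk ι ∨ ∃ _ : ι, 3 ≤ Cardinal.mk (FreeGroup Unit) := by
    right
    refine ⟨Classical.arbitrary ι, le_trans ?_ (Cardinal.aleph0_le_mk _)⟩
    exact_mod_cast (Cardinal.nat_lt_aleph0 3).le
  refine lift_injective_of_ping_pong f hcard X hXnonempty hXdisj ?_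
  intro i j hij
  refine FreeGroup.freeGroupUnitEquivInt.forall_congr_left.mpr ?_
  intro n hne1
  change FreeGroup.lift (fun _ => a i) (FreeGroup.of () ^ n) • X j ⊆ X i
  simp only [map_zpow, FreeGroup.lift_apply_of]
  have hnne0 : n ≠ 0 := by
    rintro rfl
    apply hne1
    simp [FreeGroup.freeGroupUnitEquivInt]
  exact hpow i j hij n hnne0

/- ### SL(2,ℤ) basics -/

abbrev SL2 := Matrix.SpecialLinearGroup (Fin 2) ℤ

def mkSL (a b c d : ℤ) (h : a * d - b * c = 1) : SL2 :=
  ⟨!![a, b; c, d], by rw [Matrix.det_fin_two_of]; exact h⟩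

lemma SL2_ext (M N : SL2) (h00 : M.1 0 0 = N.1 0 0) (h01 : M.1 0 1 = N.1 0 1)
    (h10 : M.1 1 0 = N.1 1 0) (h11 : M.1 1 1 = N.1 1 1) : M = N := by
  ext i j; fin_cases i <;> fin_cases j <;> assumption

lemma mul_00 (M N : SL2) : (M * N).1 0 0 = M.1 0 0 * N.1 0 0 + M.1 0 1 * N.1 1 0 := by
  simp [Matrix.SpecialLinearGroup.coe_mul, Matrix.mul_apply, Fin.sum_univ_two]
lemma mul_01 (M N : SL2) : (M * N).1 0 1 = M.1 0 0 * N.1 0 1 + M.1 0 1 * N.1 1 1 := by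
  simp [Matrix.SpecialLinearGroup.coe_mul, Matrix.mul_apply, Fin.sum_univ_two]
lemma mul_10 (M N : SL2) : (M * N).1 1 0 = M.1 1 0 * N.1 0 0 + M.1 1 1 * N.1 1 0 := by
  simp [Matrix.SpecialLinearGroup.coe_mul, Matrix.mul_apply, Fin.sum_univ_two]
lemma mul_11 (M N : SL2) : (M * N).1 1 1 = M.1 1 0 * N.1 0 1 + M.1 1 1 * N.1 1 1 := by
  simp [Matrix.SpecialLinearGroup.coe_mul, Matrix.mul_apply, Fin.sum_univ_two]

def MA : SL2 := mkSL 1 2 0 1 (by ring)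
def MB : SL2 := mkSL 1 0 (-2) 1 (by ring)
def MC : SL2 := mkSL (-1) 2 (-2) 3 (by norm_num)
def negI : SL2 := mkSL (-1) 0 0 (-1) (by norm_num)

lemma det_rel (M : SL2) : M.1 0 0 * M.1 1 1 - M.1 0 1 * M.1 1 0 = 1 := by
  have := M.2; rwa [Matrix.det_fin_two] at this

lemma inv_explicit (M : SL2) : M⁻¹ = mkSL (M.1 1 1) (-M.1 0 1) (-M.1 1 0) (M.1 0 0)
    (by have := det_rel M; linarith) := by
  rw [eq_comm, eq_inv_iff_mul_eq_one]
  apply SL2_ext <;>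
    · simp only [mul_00, mul_01, mul_10, mul_11]
      simp [mul_00, mul_01, mul_10, mul_11, mkSL, Matrix.SpecialLinearGroup.coe_one]
      try (have := det_rel M; linarith)

lemma tA : transvection (1, 0) ^ 2 = MA := by
  apply SL2_ext <;> simp only [pow_two, mul_00, mul_01, mul_10, mul_11] <;> simp [pow_two, mul_00, mul_01, mul_10, mul_11, _root_.transvection, MA, mkSL]
lemma tB : transvection (0, 1) ^ 2 = MB := by
  apply SL2_ext <;> simp only [pow_two, mul_00, mul_01, mul_10, mul_11] <;> simp [pow_two, mul_00, mul_01, mul_10, mul_11, _root_.transvection, MB, mkSL]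
lemma tC : transvection (1, 1) ^ 2 = MC := by
  apply SL2_ext <;> simp only [pow_two, mul_00, mul_01, mul_10, mul_11] <;> norm_num [pow_two, mul_00, mul_01, mul_10, mul_11, _root_.transvection, MC, mkSL]

lemma CAB : MC * (MA * MB) = negI := by
  apply SL2_ext <;> simp only [mul_00, mul_01, mul_10, mul_11] <;> norm_num [mul_00, mul_01, mul_10, mul_11, MA, MB, MC, negI, mkSL]

lemma negI_sq : negI * negI = 1 := by
  apply SL2_ext <;> simp only [mul_00, mul_01, mul_10, mul_11] <;> norm_num [mul_00, mul_01, mul_10, mul_11, negI, mkSL,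
    Matrix.SpecialLinearGroup.coe_one]

lemma negI_comm (M : SL2) : Commute M negI := by
  unfold Commute SemiconjBy
  apply SL2_ext <;> simp only [mul_00, mul_01, mul_10, mul_11] <;> simp [mul_00, mul_01, mul_10, mul_11, negI, mkSL] <;> ring

lemma tsq (c : ℤ × ℤ) : transvection c ^ 2 =
    mkSL (1 - 2 * c.1 * c.2) (2 * c.1 ^ 2) (-(2 * c.2 ^ 2)) (1 + 2 * c.1 * c.2)
      (by ring) := by
  apply SL2_ext <;> simp only [pow_two, mul_00, mul_01, mul_10, mul_11] <;> simp [pow_two, mul_00, mul_01, mul_10, mul_11, _root_.transvection, mkSL] <;> ring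

/- ### The subgroup K = ⟨A, B, -I⟩ and the Euclidean algorithm -/

def K : Subgroup SL2 := Subgroup.closure {MA, MB, negI}

lemma MA_mem : MA ∈ K := Subgroup.subset_closure (by simp)
lemma MB_mem : MB ∈ K := Subgroup.subset_closure (by simp)
lemma negI_mem : negI ∈ K := Subgroup.subset_closure (by simp)

def MAe (e : ℤ) : SL2 := mkSL 1 (2*e) 0 1 (by ring)
def MBe (e : ℤ) : SL2 := mkSL 1 0 (2*e) 1 (by ring)

lemma MAe_mem (e : ℤ) (he : e = 1 ∨ e = -1) : MAe e ∈ K := by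
  rcases he with rfl | rfl
  · have : MAe 1 = MA := by apply SL2_ext <;> norm_num [MAe, MA, mkSL]
    rw [this]; exact MA_mem
  · have : MAe (-1) = MA⁻¹ := by
      rw [eq_inv_iff_mul_eq_one]
      apply SL2_ext <;> simp only [mul_00, mul_01, mul_10, mul_11] <;> norm_num [mul_00, mul_01, mul_10, mul_11, MAe, MA, mkSL,
        Matrix.SpecialLinearGroup.coe_one]
    rw [this]; exact inv_mem MA_mem

lemma MBe_mem (e : ℤ) (he : e = 1 ∨ e = -1) : MBe e ∈ K := by
  rcases he with rfl | rfl
  · have : MBe 1 = MB⁻¹ := by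
      rw [eq_inv_iff_mul_eq_one]
      apply SL2_ext <;> simp only [mul_00, mul_01, mul_10, mul_11] <;> norm_num [mul_00, mul_01, mul_10, mul_11, MBe, MB, mkSL,
        Matrix.SpecialLinearGroup.coe_one]
    rw [this]; exact inv_mem MB_mem
  · have : MBe (-1) = MB := by apply SL2_ext <;> norm_num [MBe, MB, mkSL]
    rw [this]; exact MB_mem

lemma MAe_mul (e : ℤ) (M : SL2) :
    (MAe e * M).1 0 0 = M.1 0 0 + 2*e*M.1 1 0 ∧
    (MAe e * M).1 0 1 = M.1 0 1 + 2*e*M.1 1 1 ∧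
    (MAe e * M).1 1 0 = M.1 1 0 ∧ (MAe e * M).1 1 1 = M.1 1 1 := by
  refine ⟨?_, ?_, ?_, ?_⟩ <;> simp only [mul_00, mul_01, mul_10, mul_11] <;> simp [mul_00, mul_01, mul_10, mul_11, MAe, mkSL] <;> ring

lemma MBe_mul (e : ℤ) (M : SL2) :
    (MBe e * M).1 0 0 = M.1 0 0 ∧ (MBe e * M).1 0 1 = M.1 0 1 ∧
    (MBe e * M).1 1 0 = M.1 1 0 + 2*e*M.1 0 0 ∧
    (MBe e * M).1 1 1 = M.1 1 1 + 2*e*M.1 0 1 := by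
  refine ⟨?_, ?_, ?_, ?_⟩ <;> simp only [mul_00, mul_01, mul_10, mul_11] <;> simp [mul_00, mul_01, mul_10, mul_11, MBe, mkSL] <;> ring

lemma mem_of_elem_mul {E M : SL2} (hE : E ∈ K) (h : E * M ∈ K) : M ∈ K := by
  have := mul_mem (inv_mem hE) h
  rwa [← mul_assoc, inv_mul_cancel, one_mul] at this

lemma euclid_c0 : ∀ n : ℕ, ∀ M : SL2, M.1 1 0 = 0 → (M.1 0 1).natAbs ≤ n →
    2 ∣ M.1 0 1 → M ∈ K := by
  intro n
  induction n with
  | zero =>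
    intro M hc hb _
    have hdet := det_rel M
    rw [hc] at hdet
    have hb0 : M.1 0 1 = 0 := by omega
    have had : M.1 0 0 * M.1 1 1 = 1 := by omega
    rcases Int.eq_one_or_neg_one_of_mul_eq_one' had with ⟨h1, h2⟩ | ⟨h1, h2⟩
    · have : M = 1 := by
        apply SL2_ext <;> simp [h1, h2, hb0, hc, Matrix.SpecialLinearGroup.coe_one]
      rw [this]; exact one_mem K
    · have : M = negI := by
        apply SL2_ext <;> simp [h1, h2, hb0, hc, negI, mkSL]
      rw [this]; exact negI_mem
  | succ n ih =>
    intro M hc hb hb2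
    have hdet := det_rel M
    rw [hc] at hdet
    have had : M.1 0 0 * M.1 1 1 = 1 := by omega
    by_cases h0 : M.1 0 1 = 0
    · exact ih M hc (by simp [h0]) (by simp [h0])
    · have hd : M.1 1 1 = 1 ∨ M.1 1 1 = -1 := by
        rcases Int.eq_one_or_neg_one_of_mul_eq_one' had with ⟨_, h2⟩ | ⟨_, h2⟩ <;> simp [h2]
      obtain ⟨e, he1, he2⟩ : ∃ e : ℤ, (e = 1 ∨ e = -1) ∧
          (M.1 0 1 + 2*e*M.1 1 1).natAbs < (M.1 0 1).natAbs := by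
        rcases hd with h2 | h2
        · by_cases hbpos : 0 < M.1 0 1
          · exact ⟨-1, Or.inr rfl, by rw [h2]; omega⟩
          · exact ⟨1, Or.inl rfl, by rw [h2]; omega⟩
        · by_cases hbpos : 0 < M.1 0 1
          · exact ⟨1, Or.inl rfl, by rw [h2]; omega⟩
          · exact ⟨-1, Or.inr rfl, by rw [h2]; omega⟩
      obtain ⟨hm1, hm2, hm3, hm4⟩ := MAe_mul e M
      refine mem_of_elem_mul (MAe_mem e he1) (ih (MAe e * M) (by rw [hm3]; exact hc) ?_ ?_)
      · rw [hm2]; omega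
      · rw [hm2]; exact dvd_add hb2 ⟨e*M.1 1 1, by ring⟩

lemma euclid : ∀ n : ℕ, ∀ M : SL2, (M.1 0 0).natAbs + (M.1 1 0).natAbs ≤ n →
    2 ∣ M.1 0 1 → 2 ∣ M.1 1 0 → M ∈ K := by
  intro n
  induction n with
  | zero =>
    intro M hn hb hc
    have hdet := det_rel M
    have h1 : M.1 0 0 = 0 ∧ M.1 1 0 = 0 := by omega
    exfalso
    rw [h1.1, h1.2] at hdet
    simp at hdet
  | succ n ih =>
    intro M hn hb hc
    have hdet := det_rel M
    by_cases hc0 : M.1 1 0 = 0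
    · exact euclid_c0 (M.1 0 1).natAbs M hc0 le_rfl hb
    · have ha_odd : ¬ (2 ∣ M.1 0 0) := by
        intro h2a
        have : (2:ℤ) ∣ 1 := by
          have h1 : (2:ℤ) ∣ M.1 0 0 * M.1 1 1 := Dvd.dvd.mul_right h2a _
          have h2 : (2:ℤ) ∣ M.1 0 1 * M.1 1 0 := Dvd.dvd.mul_right hb _
          omega
        omega
      have hne : (M.1 0 0).natAbs ≠ (M.1 1 0).natAbs := by
        intro h
        rcases hb with ⟨m, hm⟩
        rcases hc with ⟨m', hm'⟩
        omega
      rcases lt_or_gt_of_ne hne with hlt | hgt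
      · have ha0 : M.1 0 0 ≠ 0 := by omega
        obtain ⟨e, he1, he2⟩ : ∃ e : ℤ, (e = 1 ∨ e = -1) ∧
            (M.1 1 0 + 2*e*M.1 0 0).natAbs < (M.1 1 0).natAbs := by
          by_cases h1 : 0 < M.1 0 0 <;> by_cases h2 : 0 < M.1 1 0
          · exact ⟨-1, Or.inr rfl, by omega⟩
          · exact ⟨1, Or.inl rfl, by omega⟩
          · exact ⟨1, Or.inl rfl, by omega⟩
          · exact ⟨-1, Or.inr rfl, by omega⟩
        obtain ⟨hm1, hm2, hm3, hm4⟩ := MBe_mul e M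
        refine mem_of_elem_mul (MBe_mem e he1) (ih (MBe e * M) ?_ ?_ ?_)
        · rw [hm1, hm3]; omega
        · rw [hm2]; exact hb
        · rw [hm3]; exact dvd_add hc ⟨e*M.1 0 0, by ring⟩
      · obtain ⟨e, he1, he2⟩ : ∃ e : ℤ, (e = 1 ∨ e = -1) ∧
            (M.1 0 0 + 2*e*M.1 1 0).natAbs < (M.1 0 0).natAbs := by
          by_cases h1 : 0 < M.1 0 0 <;> by_cases h2 : 0 < M.1 1 0
          · exact ⟨-1, Or.inr rfl, by omega⟩
          · exact ⟨1, Or.inl rfl, by omega⟩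
          · exact ⟨1, Or.inl rfl, by omega⟩
          · exact ⟨-1, Or.inr rfl, by omega⟩
        obtain ⟨hm1, hm2, hm3, hm4⟩ := MAe_mul e M
        refine mem_of_elem_mul (MAe_mem e he1) (ih (MAe e * M) ?_ ?_ ?_)
        · rw [hm1, hm3]; omega
        · rw [hm2]; exact dvd_add hb ⟨e*M.1 1 1, by ring⟩
        · rw [hm3]; exact hc

/- ### The action of SL(2,ℤ) on ℤ² and the ping-pong estimate -/

instance : SMul SL2 (Fin 2 → ℤ) := ⟨fun g v => (g : Matrix (Fin 2) (Fin 2) ℤ) *ᵥ v⟩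

lemma smul_def (g : SL2) (v : Fin 2 → ℤ) : g • v = (g : Matrix (Fin 2) (Fin 2) ℤ) *ᵥ v := rfl

instance : MulAction SL2 (Fin 2 → ℤ) where
  one_smul v := by rw [smul_def]; simp
  mul_smul g h v := by rw [smul_def, smul_def, smul_def]; simp [← Matrix.mulVec_mulVec]

lemma MA_smul (w : Fin 2 → ℤ) : MA • w = ![w 0 + 2 * w 1, w 1] := by
  funext i; fin_cases i <;>
    simp only [smul_def] <;> simp [smul_def, MA, mkSL, Matrix.mulVec, dotProduct, Fin.sum_univ_two] <;> try ring

lemma MA_inv_smul (w : Fin 2 → ℤ) : MA⁻¹ • w = ![w 0 - 2 * w 1, w 1] := by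
  have h2 : MA • ![w 0 - 2 * w 1, w 1] = w := by
    rw [MA_smul]; funext i; fin_cases i <;> simp <;> try ring
  calc MA⁻¹ • w = MA⁻¹ • MA • ![w 0 - 2 * w 1, w 1] := by rw [h2]
  _ = _ := by rw [inv_smul_smul]

lemma MA_zpow_smul (n : ℤ) (v : Fin 2 → ℤ) :
    (MA ^ n) • v = ![v 0 + 2 * n * v 1, v 1] := by
  induction n using Int.induction_on with
  | zero => funext i; rw [zpow_zero, one_smul]; fin_cases i <;> simp
  | succ k ih =>
    rw [show ((k:ℤ)+1) = 1 + (k:ℤ) by ring, _root_.zpow_add, zpow_one,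
      mul_smul, ih, MA_smul]
    funext i; fin_cases i <;> simp <;> ring
  | pred k ih =>
    rw [show (-(k:ℤ)-1) = -1 + (-(k:ℤ)) by ring, _root_.zpow_add, _root_.zpow_neg_one,
      mul_smul, ih, MA_inv_smul]
    funext i; fin_cases i <;> simp <;> ring

lemma MB_smul (w : Fin 2 → ℤ) : MB • w = ![w 0, w 1 - 2 * w 0] := by
  funext i; fin_cases i <;>
    simp only [smul_def] <;> simp [smul_def, MB, mkSL, Matrix.mulVec, dotProduct, Fin.sum_univ_two] <;> try ring

lemma MB_inv_smul (w : Fin 2 → ℤ) : MB⁻¹ • w = ![w 0, w 1 + 2 * w 0] := by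
  have h2 : MB • ![w 0, w 1 + 2 * w 0] = w := by
    rw [MB_smul]; funext i; fin_cases i <;> simp <;> try ring
  calc MB⁻¹ • w = MB⁻¹ • MB • ![w 0, w 1 + 2 * w 0] := by rw [h2]
  _ = _ := by rw [inv_smul_smul]

lemma MB_zpow_smul (n : ℤ) (v : Fin 2 → ℤ) :
    (MB ^ n) • v = ![v 0, v 1 - 2 * n * v 0] := by
  induction n using Int.induction_on with
  | zero => funext i; rw [zpow_zero, one_smul]; fin_cases i <;> simp
  | succ k ih =>
    rw [show ((k:ℤ)+1) = 1 + (k:ℤ) by ring, _root_.zpow_add, zpow_one,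
      mul_smul, ih, MB_smul]
    funext i; fin_cases i <;> simp <;> ring
  | pred k ih =>
    rw [show (-(k:ℤ)-1) = -1 + (-(k:ℤ)) by ring, _root_.zpow_add, _root_.zpow_neg_one,
      mul_smul, ih, MB_inv_smul]
    funext i; fin_cases i <;> simp <;> ring

lemma grow (x y : ℤ) (n : ℤ) (hn : n ≠ 0) (h : x.natAbs < y.natAbs) :
    y.natAbs < (x + 2 * n * y).natAbs := by
  have h1 : (2 * n * y).natAbs = 2 * n.natAbs * y.natAbs := by
    simp [Int.natAbs_mul]; try ring
  have h2 : 1 ≤ n.natAbs := by omega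
  have h3 : 2 * y.natAbs ≤ (2 * n * y).natAbs := by
    rw [h1]
    calc 2 * y.natAbs = 2 * 1 * y.natAbs := by ring
    _ ≤ 2 * n.natAbs * y.natAbs := Nat.mul_le_mul_right _ (by omega)
  omega

/- ### The free part -/

def Fhom : FreeGroup (Fin 2) →* SL2 := FreeGroup.lift ![MA, MB]

def Xpp : Fin 2 → Set (Fin 2 → ℤ) :=
  ![{v | (v 1).natAbs < (v 0).natAbs}, {v | (v 0).natAbs < (v 1).natAbs}]

lemma Fhom_inj : Function.Injective Fhom := by
  apply pingpong ![MA, MB] Xpp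
  · intro i
    fin_cases i
    · exact ⟨![1, 0], by simp [Xpp]⟩
    · exact ⟨![0, 1], by simp [Xpp]⟩
  · intro i j hij
    fin_cases i <;> fin_cases j <;> simp at hij ⊢ <;>
      · show Disjoint _ _
        rw [Set.disjoint_left]
        intro v h1 h2
        simp [Xpp] at h1 h2
        omega
  · intro i j hij n hn
    fin_cases i <;> fin_cases j <;> simp at hij ⊢
    · intro x hx
      rw [Set.mem_smul_set] at hx
      obtain ⟨v, hv, rfl⟩ := hx
      simp [Xpp] at hv ⊢
      rw [MA_zpow_smul]
      simpa using grow (v 0) (v 1) n hn hv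
    · intro x hx
      rw [Set.mem_smul_set] at hx
      obtain ⟨v, hv, rfl⟩ := hx
      simp [Xpp] at hv ⊢
      rw [MB_zpow_smul]
      have := grow (v 1) (v 0) (-n) (by omega) hv
      simpa [show v 1 + 2 * -n * v 0 = v 1 - 2 * n * v 0 by ring, sub_eq_add_neg] using this

/- ### The mod 4 invariant : -I is not in ⟨A, B⟩ -/

def Pinv (M : SL2) : Prop :=
  M.1 0 0 % 4 = 1 ∧ M.1 1 1 % 4 = 1 ∧ M.1 0 1 % 2 = 0 ∧ M.1 1 0 % 2 = 0

lemma Pinv_closure : ∀ M ∈ Subgroup.closure {MA, MB}, Pinv M := by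
  intro M hM
  induction hM using Subgroup.closure_induction with
  | mem x hx =>
    rcases hx with rfl | rfl <;> exact ⟨by norm_num [MA, MB, mkSL], by norm_num [MA, MB, mkSL],
      by norm_num [MA, MB, mkSL], by norm_num [MA, MB, mkSL]⟩
  | one => refine ⟨?_, ?_, ?_, ?_⟩ <;> simp [Matrix.SpecialLinearGroup.coe_one]
  | mul x y _ _ hx hy =>
    obtain ⟨hx1, hx2, hx3, hx4⟩ := hx
    obtain ⟨hy1, hy2, hy3, hy4⟩ := hy
    obtain ⟨p, hp⟩ : ∃ p, x.1 0 0 = 4*p+1 := ⟨x.1 0 0 / 4, by omega⟩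
    obtain ⟨q, hq⟩ : ∃ q, x.1 1 1 = 4*q+1 := ⟨x.1 1 1 / 4, by omega⟩
    obtain ⟨m, hm⟩ : ∃ m, x.1 0 1 = 2*m := ⟨x.1 0 1 / 2, by omega⟩
    obtain ⟨l, hl⟩ : ∃ l, x.1 1 0 = 2*l := ⟨x.1 1 0 / 2, by omega⟩
    obtain ⟨p', hp'⟩ : ∃ p, y.1 0 0 = 4*p+1 := ⟨y.1 0 0 / 4, by omega⟩
    obtain ⟨q', hq'⟩ : ∃ q, y.1 1 1 = 4*q+1 := ⟨y.1 1 1 / 4, by omega⟩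
    obtain ⟨m', hm'⟩ : ∃ m, y.1 0 1 = 2*m := ⟨y.1 0 1 / 2, by omega⟩
    obtain ⟨l', hl'⟩ : ∃ l, y.1 1 0 = 2*l := ⟨y.1 1 0 / 2, by omega⟩
    refine ⟨?_, ?_, ?_, ?_⟩
    · rw [mul_00, hp, hp', hm, hl']
      have : (4*p+1) * (4*p'+1) + 2*m * (2*l') - 1 = 4 * (4*p*p' + p + p' + m*l') := by ring
      omega
    · rw [mul_11, hq, hq', hl, hm']
      have : 2*l * (2*m') + (4*q+1) * (4*q'+1) - 1 = 4 * (l*m' + 4*q*q' + q + q') := by ring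
      omega
    · rw [mul_01, hp, hm, hm', hq']
      have : (4*p+1) * (2*m') + 2*m * (4*q'+1) = 2 * ((4*p+1)*m' + m*(4*q'+1)) := by ring
      omega
    · rw [mul_10, hl, hp', hq, hl']
      have : 2*l * (4*p'+1) + (4*q+1) * (2*l') = 2 * (l*(4*p'+1) + (4*q+1)*l') := by ring
      omega
  | inv x _ hx =>
    obtain ⟨hx1, hx2, hx3, hx4⟩ := hx
    rw [inv_explicit]
    exact ⟨by simpa [mkSL] using hx2, by simpa [mkSL] using hx1, by simp [mkSL]; omega,
      by simp [mkSL]; omega⟩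

lemma negI_not_in : negI ∉ Subgroup.closure {MA, MB} := by
  intro h
  have := (Pinv_closure negI h).1
  norm_num [negI, mkSL] at this

/- ### The C₂ factor and the full homomorphism -/

def c2 : Multiplicative (ZMod 2) →* SL2 where
  toFun x := if x.toAdd = 0 then 1 else negI
  map_one' := by simp
  map_mul' x y := by
    have hcases : ∀ z : ZMod 2, z = 0 ∨ z = 1 := by decide
    have hxy : (x * y).toAdd = x.toAdd + y.toAdd := rfl
    show (if (x*y).toAdd = 0 then (1:SL2) else negI) =
      (if x.toAdd = 0 then (1:SL2) else negI) * (if y.toAdd = 0 then 1 else negI)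
    rcases hcases x.toAdd with hx | hx <;> rcases hcases y.toAdd with hy | hy <;>
      rw [hxy, hx, hy] <;>
      simp [negI_sq, show (1+1 : ZMod 2) = 0 from by decide, show (1:ZMod 2) ≠ 0 from by decide]

lemma c2_apply (x : Multiplicative (ZMod 2)) : c2 x = if x.toAdd = 0 then 1 else negI := rfl

def Phi : FreeGroup (Fin 2) × Multiplicative (ZMod 2) →* SL2 :=
  Fhom.noncommCoprod c2 (by
    intro m n
    rw [c2_apply]
    by_cases h : n.toAdd = 0
    · simp [h]
    · simp only [h, if_false]
      exact negI_comm _)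

lemma Phi_apply (w : FreeGroup (Fin 2)) (x : Multiplicative (ZMod 2)) :
    Phi (w, x) = Fhom w * c2 x := rfl

lemma Fhom_range : Fhom.range = Subgroup.closure {MA, MB} := by
  rw [Fhom, FreeGroup.range_lift_eq_closure]
  congr 1
  ext x
  constructor
  · rintro ⟨i, rfl⟩
    fin_cases i <;> simp
  · rintro (rfl | rfl)
    · exact ⟨0, rfl⟩
    · exact ⟨1, rfl⟩

lemma Phi_inj : Function.Injective Phi := by
  rw [injective_iff_map_eq_one]
  rintro ⟨w, x⟩ h
  rw [Phi_apply] at h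
  have hcases : ∀ z : ZMod 2, z = 0 ∨ z = 1 := by decide
  rcases hcases x.toAdd with hx | hx
  · have hx1 : x = 1 := by
      have := Multiplicative.toAdd.injective (a₁ := x) (a₂ := 1)
      apply this
      simpa using hx
    rw [hx1, _root_.map_one, mul_one] at h
    have : w = 1 := Fhom_inj (by simpa using h)
    rw [this, hx1]
    rfl
  · exfalso
    rw [c2_apply, hx] at h
    simp [show (1:ZMod 2) ≠ 0 from by decide] at h
    have hF : Fhom w = negI := by
      have : Fhom w * negI * negI = negI := by rw [h]; exact (one_mul negI).symm ▸ rfl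
      rwa [mul_assoc, negI_sq, mul_one] at this
    apply negI_not_in
    rw [← Fhom_range]
    exact hF ▸ ⟨w, rfl⟩

lemma Phi_range : Phi.range = K := by
  apply le_antisymm
  · rintro _ ⟨⟨w, x⟩, rfl⟩
    rw [Phi_apply]
    apply mul_mem
    · have hw : Fhom w ∈ Fhom.range := ⟨w, rfl⟩
      rw [Fhom_range] at hw
      exact Subgroup.closure_mono (by intro t ht; simp at ht; rcases ht with rfl | rfl <;> simp) hw
    · rw [c2_apply]
      by_cases h : x.toAdd = 0
      · simp only [h, if_pos]; exact one_mem K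
      · simp only [h, if_false]; exact negI_mem
  · rw [K]
    rw [Subgroup.closure_le]
    rintro x (rfl | rfl | rfl)
    · exact ⟨(FreeGroup.of 0, 1), by rw [Phi_apply, _root_.map_one, mul_one]; simp [Fhom]⟩
    · exact ⟨(FreeGroup.of 1, 1), by rw [Phi_apply, _root_.map_one, mul_one]; simp [Fhom]⟩
    · refine ⟨(1, Multiplicative.ofAdd 1), ?_⟩
      rw [Phi_apply, _root_.map_one, one_mul, c2_apply]
      simp [show (1:ZMod 2) ≠ 0 from by decide]

/- ### Closure identifications -/

def Sset : Set SL2 :=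
  {T | ∃ c : ℤ × ℤ, IsCoprime c.1 c.2 ∧ T = (transvection c) ^ 2}

lemma MC_eq : MC = negI * (MA * MB)⁻¹ := by
  rw [eq_mul_inv_iff_mul_eq, CAB]

lemma K_eq_KABC : K = Subgroup.closure {MA, MB, MC} := by
  apply le_antisymm
  · rw [K, Subgroup.closure_le]
    rintro x (rfl | rfl | rfl)
    · exact Subgroup.subset_closure (by simp)
    · exact Subgroup.subset_closure (by simp)
    · rw [← CAB]
      exact mul_mem (Subgroup.subset_closure (by simp))
        (mul_mem (Subgroup.subset_closure (by simp)) (Subgroup.subset_closure (by simp)))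
  · rw [Subgroup.closure_le]
    rintro x (rfl | rfl | rfl)
    · exact MA_mem
    · exact MB_mem
    · rw [MC_eq]
      exact mul_mem negI_mem (inv_mem (mul_mem MA_mem MB_mem))

lemma closure_S_eq_K : Subgroup.closure Sset = K := by
  apply le_antisymm
  · rw [Subgroup.closure_le]
    rintro x ⟨c, hcop, rfl⟩
    show transvection c ^ 2 ∈ K
    rw [tsq]
    apply euclid (((1 - 2 * c.1 * c.2 : ℤ)).natAbs + ((-(2 * c.2 ^ 2) : ℤ)).natAbs)
    · simp [mkSL]
    · exact ⟨c.1 ^ 2, by simp [mkSL]⟩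
    · exact ⟨-(c.2 ^ 2), by simp [mkSL]; try ring⟩
  · rw [K, Subgroup.closure_le]
    rintro x (rfl | rfl | rfl)
    · exact Subgroup.subset_closure ⟨(1, 0), isCoprime_one_left, tA.symm⟩
    · exact Subgroup.subset_closure ⟨(0, 1), isCoprime_one_right, tB.symm⟩
    · have hMC : MC ∈ Subgroup.closure Sset :=
        Subgroup.subset_closure ⟨(1, 1), isCoprime_one_left, tC.symm⟩
      have hMA : MA ∈ Subgroup.closure Sset :=
        Subgroup.subset_closure ⟨(1, 0), isCoprime_one_left, tA.symm⟩
      have hMB : MB ∈ Subgroup.closure Sset :=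
        Subgroup.subset_closure ⟨(0, 1), isCoprime_one_right, tB.symm⟩
      rw [← CAB]
      exact mul_mem hMC (mul_mem hMA hMB)

end Stmt11Aux

open Stmt11Aux in
/-- The subgroup of `SL(2,ℤ)` generated by all squares of transvections along primitive
vectors equals `⟨T_{(1,0)}², T_{(0,1)}², T_{(1,1)}²⟩` and is isomorphic to `F₂ × C₂`. -/
theorem stmt_11 :
    Subgroup.closure
        {T : Matrix.SpecialLinearGroup (Fin 2) ℤ |
          ∃ c : ℤ × ℤ, IsCoprime c.1 c.2 ∧ T = (transvection c) ^ 2}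
      = Subgroup.closure
          {transvection (1, 0) ^ 2, transvection (0, 1) ^ 2, transvection (1, 1) ^ 2} ∧
    Nonempty ((Subgroup.closure
        {T : Matrix.SpecialLinearGroup (Fin 2) ℤ |
          ∃ c : ℤ × ℤ, IsCoprime c.1 c.2 ∧ T = (transvection c) ^ 2})
      ≃* FreeGroup (Fin 2) × Multiplicative (ZMod 2)) := by
  have hS : Subgroup.closure
      {T : Matrix.SpecialLinearGroup (Fin 2) ℤ |
        ∃ c : ℤ × ℤ, IsCoprime c.1 c.2 ∧ T = (transvection c) ^ 2} = Subgroup.closure Sset := rfl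
  constructor
  · rw [hS, closure_S_eq_K, tA, tB, tC]
    exact K_eq_KABC
  · have h1 : Subgroup.closure Sset = Phi.range := by rw [closure_S_eq_K, Phi_range]
    have e1 : (FreeGroup (Fin 2) × Multiplicative (ZMod 2)) ≃* Phi.range :=
      MonoidHom.ofInjective Phi_inj
    exact ⟨(MulEquiv.subgroupCongr (hS.trans h1)).trans e1.symm⟩
end

section
/- For every s ≥ 4, the family of transvection powers {T_{(k,1)}^s : k ∈ ℤ} along the primitive vectors (k,1) freely generates a free subgroup of infinite rank in SL(2,ℤ). -/
abbrev SL2Q := Matrix.SpecialLinearGroup (Fin 2) ℚ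

def Pm (k m : ℤ) : SL2Q :=
  ⟨!![1 - (k:ℚ)*m, (k:ℚ)^2*m; -(m:ℚ), 1+(k:ℚ)*m], by rw [Matrix.det_fin_two_of]; ring⟩


lemma Pm_mul (k m m' : ℤ) : Pm k m * Pm k m' = Pm k (m + m') := by
  ext i j
  rw [Matrix.SpecialLinearGroup.coe_mul]
  fin_cases i <;> fin_cases j <;>
    simp [Pm, Matrix.mul_fin_two] <;> ring

lemma Pm_zero (k : ℤ) : Pm k 0 = 1 := by
  ext i j
  fin_cases i <;> fin_cases j <;> simp [Pm]

lemma Pm_zpow (k : ℤ) (n : ℤ) : (Pm k 1) ^ n = Pm k n := by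
  induction n using Int.induction_on with
  | zero => simpa using (Pm_zero k).symm
  | succ n ih => rw [_root_.zpow_add, zpow_one, ih, Pm_mul]
  | pred n ih =>
    have hinv : (Pm k 1)⁻¹ = Pm k (-1) := by
      apply inv_eq_of_mul_eq_one_right
      rw [Pm_mul]; simpa using Pm_zero k
    rw [sub_eq_add_neg, _root_.zpow_add, ih, _root_.zpow_neg, zpow_one, hinv, Pm_mul]

lemma map_transvection (k : ℤ) :
    Matrix.SpecialLinearGroup.map (Int.castRingHom ℚ) (transvection (k, 1)) = Pm k 1 := by
  ext i j
  rw [Matrix.SpecialLinearGroup.map_apply_coe]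
  fin_cases i <;> fin_cases j <;>
    simp [transvection, Pm, Matrix.map_apply] <;> push_cast <;> ring

instance : SMul SL2Q (Fin 2 → ℚ) := ⟨fun A v => A.1.mulVec v⟩

lemma smul_def (A : SL2Q) (v : Fin 2 → ℚ) : A • v = A.1.mulVec v := rfl

instance : MulAction SL2Q (Fin 2 → ℚ) where
  one_smul v := by simp [smul_def]
  mul_smul A B v := by rw [smul_def, smul_def, smul_def, Matrix.mulVec_mulVec]; rfl

def lf (k : ℤ) (v : Fin 2 → ℚ) : ℚ := k * v 1 - v 0

lemma lf_smul (k m i : ℤ) (v : Fin 2 → ℚ) :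
    lf i (Pm k m • v) = lf i v + m * lf k v * (i - k) := by
  rw [smul_def]
  simp [lf, smul_def, Pm, Matrix.mulVec, dotProduct, Fin.sum_univ_two]
  ring

def XX (k : ℤ) : Set (Fin 2 → ℚ) := {v | ∀ i : ℤ, i ≠ k → |lf k v| < |lf i v|}

lemma XX_nonempty (k : ℤ) : (XX k).Nonempty := by
  refine ⟨![(k:ℚ), 1], fun i hi => ?_⟩
  have h1 : lf k ![(k:ℚ), 1] = 0 := by simp [lf]
  have h2 : lf i ![(k:ℚ), 1] = (i:ℚ) - k := by simp [lf]
  rw [h1, h2, abs_zero, abs_pos, sub_ne_zero]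
  exact_mod_cast hi

lemma XX_disj : Pairwise (Function.onFun Disjoint XX) := by
  intro k j hkj
  rw [Function.onFun, Set.disjoint_left]
  intro v hk hj
  exact lt_asymm (hk j (Ne.symm hkj)) (hj k hkj)

lemma lf_rel (i j k : ℤ) (v : Fin 2 → ℚ) :
    ((j:ℚ) - k) * lf i v = ((i:ℚ) - k) * lf j v + ((j:ℚ) - i) * lf k v := by
  simp [lf]; ring

lemma ping (s : ℕ) (hs : 4 ≤ s) {k j : ℤ} (hkj : k ≠ j) (m : ℤ) (hm : (s:ℤ) ≤ |m|)
    {v : Fin 2 → ℚ} (hv : v ∈ XX j) : Pm k m • v ∈ XX k := by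
  intro i hi
  have hfk : lf k (Pm k m • v) = lf k v := by rw [lf_smul]; ring
  rw [hfk, lf_smul]
  set A := lf j v with hA
  set B := lf k v with hB
  have hAB : |A| < |B| := hv k hkj
  set d : ℚ := (i:ℚ) - k with hd
  set p : ℚ := (j:ℚ) - k with hp
  set q : ℚ := (j:ℚ) - i with hq
  have hrel : p * lf i v = d * A + q * B := lf_rel i j k v
  have h1d : 1 ≤ |d| := by
    rw [hd]
    have : (1:ℚ) ≤ |((i - k : ℤ) : ℚ)| := by
      rw [← Int.cast_abs]
      exact_mod_cast Int.one_le_abs (sub_ne_zero.mpr hi)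
    simpa using this
  have h1p : 1 ≤ |p| := by
    rw [hp]
    have : (1:ℚ) ≤ |((j - k : ℤ) : ℚ)| := by
      rw [← Int.cast_abs]
      exact_mod_cast Int.one_le_abs (sub_ne_zero.mpr (Ne.symm hkj))
    simpa using this
  have hqdp : |q| ≤ |d| + |p| := by
    have : q = p - d := by rw [hp, hd, hq]; ring
    rw [this]
    calc |p - d| ≤ |p| + |d| := abs_sub _ _
    _ = |d| + |p| := by ring
  have hM : (4:ℚ) ≤ |(m:ℚ)| := by
    rw [← Int.cast_abs]
    have : (4:ℤ) ≤ |m| := le_trans (by exact_mod_cast hs) hm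
    exact_mod_cast this
  -- main computation
  set t : ℚ := lf i v + m * B * d with ht
  have hpt : p * t = d * A + q * B + (m:ℚ) * B * d * p := by rw [ht]; rw [mul_add, hrel]; ring
  have hlow : |(m:ℚ) * B * d * p| - |d * A + q * B| ≤ |p * t| := by
    have h2 : (m:ℚ) * B * d * p = p * t - (d * A + q * B) := by rw [hpt]; ring
    have h := abs_sub (p * t) (d * A + q * B)
    rw [← h2] at h
    linarith
  have hexp : |(m:ℚ) * B * d * p| = |(m:ℚ)| * |B| * |d| * |p| := by
    rw [abs_mul, abs_mul, abs_mul]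
  have hexp2 : |d * A + q * B| ≤ |d| * |A| + |q| * |B| := by
    calc |d * A + q * B| ≤ |d * A| + |q * B| := abs_add_le _ _
    _ = |d| * |A| + |q| * |B| := by rw [abs_mul, abs_mul]
  have hB0 : 0 ≤ |B| := abs_nonneg _
  have hA0 : 0 ≤ |A| := abs_nonneg _
  have key : |p| * |B| < |p| * |t| := by
    rw [← abs_mul p t]
    have : |p| * |B| < |(m:ℚ)| * |B| * |d| * |p| - (|d| * |A| + |q| * |B|) := by
      nlinarith [mul_nonneg (mul_nonneg (abs_nonneg d) (abs_nonneg p)) hB0,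
        mul_lt_mul_of_pos_left hAB (lt_of_lt_of_le one_pos h1d),
        mul_nonneg (abs_nonneg q) hB0,
        mul_nonneg (sub_nonneg.mpr h1d) (mul_nonneg (abs_nonneg p) hB0),
        mul_nonneg (sub_nonneg.mpr h1p) (mul_nonneg (abs_nonneg d) hB0),
        mul_nonneg (sub_nonneg.mpr hM) (mul_nonneg (mul_nonneg (abs_nonneg d) (abs_nonneg p)) hB0)]
    linarith
  have hp0 : 0 < |p| := lt_of_lt_of_le one_pos h1p
  have := lt_of_mul_lt_mul_left key (le_of_lt hp0)
  exact this

open Cardinal Pointwise in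
lemma freeGroup_pp {ι : Type*} [Nontrivial ι] (hcard3 : 3 ≤ #ι) {G : Type*} [Group G] (a : ι → G)
    {α : Type*} [MulAction G α] (X : ι → Set α)
    (hXnonempty : ∀ i, (X i).Nonempty) (hXdisj : Pairwise (Function.onFun Disjoint X))
    (hpp : Pairwise fun i j => ∀ n : ℤ, n ≠ 0 → (a i) ^ n • X j ⊆ X i) :
    Function.Injective (FreeGroup.lift a) := by
  have heq : FreeGroup.lift a =
      (Monoid.CoprodI.lift fun i => FreeGroup.lift fun _ => a i).comp
        (@freeGroupEquivCoprodI ι).toMonoidHom := by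
    ext i; simp
  rw [heq, MonoidHom.coe_comp]
  refine Function.Injective.comp ?_ (MulEquiv.injective freeGroupEquivCoprodI)
  let H : ι → Type _ := fun _ => FreeGroup Unit
  let f : ∀ i, H i →* G := fun i => FreeGroup.lift fun _ => a i
  apply Monoid.CoprodI.lift_injective_of_ping_pong f (Or.inl hcard3) X hXnonempty hXdisj
  intro i j hij
  refine FreeGroup.freeGroupUnitEquivInt.forall_congr_left.mpr ?_
  intro n hne1
  change FreeGroup.lift (fun _ => a i) (FreeGroup.of () ^ n) • X j ⊆ X i
  simp only [map_zpow, FreeGroup.lift_apply_of]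
  have hn : n ≠ 0 := by
    rintro rfl
    apply hne1
    simp [H, FreeGroup.freeGroupUnitEquivInt]
  exact hpp hij n hn

/-- For `s ≥ 4`, the powers `T_{(k,1)}^s`, `k ∈ ℤ`, freely generate a free subgroup
of infinite rank in `SL(2,ℤ)`. -/
theorem stmt_13 (s : ℕ) (hs : 4 ≤ s) :
    Function.Injective (FreeGroup.lift (fun k : ℤ => (transvection (k, 1)) ^ s)) := by
  have hinj : Function.Injective (FreeGroup.lift (fun k : ℤ => Pm k (s:ℤ))) := by
    have hcard3 : (3 : Cardinal) ≤ Cardinal.mk ℤ := by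
      rw [Cardinal.mk_int]
      exact_mod_cast (Cardinal.nat_lt_aleph0 3).le
    apply freeGroup_pp hcard3 _ XX XX_nonempty XX_disj
    intro k j hkj n hn
    have hzp : (Pm k (s:ℤ)) ^ n = Pm k ((s:ℤ) * n) := by
      rw [← Pm_zpow k (s:ℤ), ← zpow_mul, Pm_zpow]
    rw [hzp]
    rintro x ⟨v, hv, rfl⟩
    refine ping s hs hkj ((s:ℤ) * n) ?_ hv
    rw [abs_mul]
    have h1 : (1:ℤ) ≤ |n| := Int.one_le_abs hn
    have h2 : |(s:ℤ)| = (s:ℤ) := abs_of_nonneg (by positivity)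
    nlinarith [Int.ofNat_le.mpr (Nat.zero_le s)]
  have hcomp : (Matrix.SpecialLinearGroup.map (Int.castRingHom ℚ)).comp
      (FreeGroup.lift (fun k : ℤ => (transvection (k, 1)) ^ s)) =
      FreeGroup.lift (fun k : ℤ => Pm k (s:ℤ)) := by
    ext k
    simp only [MonoidHom.comp_apply, FreeGroup.lift_apply_of, map_pow, map_transvection]
    rw [← zpow_natCast, Pm_zpow]
  have : Function.Injective ((Matrix.SpecialLinearGroup.map (Int.castRingHom ℚ)).comp
      (FreeGroup.lift (fun k : ℤ => (transvection (k, 1)) ^ s))) := by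
    rw [hcomp]; exact hinj
  rw [MonoidHom.coe_comp] at this
  exact Function.Injective.of_comp this
end

section
/- Suppose x, y, z are primitive vectors in ℤ² (representing simple closed curves on the torus) with pairwise geometric intersection numbers d(x,y)=1 and d(y,z)=1 and d(x,z) ≤ 1, where d(u,v)=|det(u v)|. If d(x,z)=1, then after a change of basis of ℤ² by an element of SL(2,ℤ), and after applying powers of the squared transvections T_x² and T_y² to z, one may take x=(1,0), y=(0,1), z=(1,1). -/
lemma mulVec22 (p q r s u v : ℤ) : (!![p,q;r,s]).mulVec ![u,v] = ![p*u+q*v, r*u+s*v] := by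
  funext i; fin_cases i <;> simp [Matrix.mulVec, dotProduct, Fin.sum_univ_two]

/-- If `x, y, z` are primitive with pairwise intersection numbers all equal to `1`, then
after a change of basis by an element of `SL(2,ℤ)` sending `x` to `±(1,0)` and `y` to
`±(0,1)`, and after applying a word in the squared transvections `T_x², T_y²` to `z`,
one may take `x = (1,0)`, `y = (0,1)`, `z = (1,1)` (up to sign). -/
theorem stmt_17 (x y z : ℤ × ℤ)
    (hx : IsCoprime x.1 x.2) (hy : IsCoprime y.1 y.2) (hz : IsCoprime z.1 z.2)
    (hxy : |x.1 * y.2 - x.2 * y.1| = 1) (hyz : |y.1 * z.2 - y.2 * z.1| = 1)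
    (hxz : |x.1 * z.2 - x.2 * z.1| = 1) :
    ∃ g : Matrix.SpecialLinearGroup (Fin 2) ℤ,
      ((g : Matrix (Fin 2) (Fin 2) ℤ).mulVec ![x.1, x.2] = ![1, 0] ∨
        (g : Matrix (Fin 2) (Fin 2) ℤ).mulVec ![x.1, x.2] = ![-1, 0]) ∧
      ((g : Matrix (Fin 2) (Fin 2) ℤ).mulVec ![y.1, y.2] = ![0, 1] ∨
        (g : Matrix (Fin 2) (Fin 2) ℤ).mulVec ![y.1, y.2] = ![0, -1]) ∧
      ∃ h ∈ Subgroup.closure {transvection (1, 0) ^ 2, transvection (0, 1) ^ 2},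
        (((h : Matrix.SpecialLinearGroup (Fin 2) ℤ) * g : Matrix.SpecialLinearGroup (Fin 2) ℤ)
              : Matrix (Fin 2) (Fin 2) ℤ).mulVec ![z.1, z.2] = ![1, 1] ∨
          (((h : Matrix.SpecialLinearGroup (Fin 2) ℤ) * g : Matrix.SpecialLinearGroup (Fin 2) ℤ)
              : Matrix (Fin 2) (Fin 2) ℤ).mulVec ![z.1, z.2] = ![-1, -1] := by
  obtain ⟨x1, x2⟩ := x; obtain ⟨y1, y2⟩ := y; obtain ⟨z1, z2⟩ := z
  simp only at *
  obtain ⟨a, ha, ha1⟩ : ∃ a : ℤ, x1 * y2 - x2 * y1 = a ∧ (a = 1 ∨ a = -1) :=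
    ⟨_, rfl, abs_eq (by norm_num) |>.mp hxy⟩
  obtain ⟨b, hb, hb1⟩ : ∃ b : ℤ, y1 * z2 - y2 * z1 = b ∧ (b = 1 ∨ b = -1) :=
    ⟨_, rfl, abs_eq (by norm_num) |>.mp hyz⟩
  obtain ⟨c, hc, hc1⟩ : ∃ c : ℤ, x1 * z2 - x2 * z1 = c ∧ (c = 1 ∨ c = -1) :=
    ⟨_, rfl, abs_eq (by norm_num) |>.mp hxz⟩
  have haa : a * a = 1 := by rcases ha1 with h|h <;> rw [h] <;> ring
  have hdet : Matrix.det !![a * y2, -(a * y1); -x2, x1] = 1 := by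
    rw [Matrix.det_fin_two_of]; linear_combination a * ha + haa
  refine ⟨⟨_, hdet⟩, ?_, ?_, ?_⟩
  · left
    show (!![a * y2, -(a * y1); -x2, x1]).mulVec ![x1, x2] = ![1, 0]
    rw [mulVec22, show a * y2 * x1 + -(a * y1) * x2 = 1 by linear_combination a * ha + haa,
      show -x2 * x1 + x1 * x2 = 0 by ring]
  · have h0 : a * y2 * y1 + -(a * y1) * y2 = 0 := by ring
    have h2 : -x2 * y1 + x1 * y2 = a := by linear_combination ha
    rcases ha1 with h|h
    · left
      show (!![a * y2, -(a * y1); -x2, x1]).mulVec ![y1, y2] = ![0, 1]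
      rw [mulVec22, h0, h2, h]
    · right
      show (!![a * y2, -(a * y1); -x2, x1]).mulVec ![y1, y2] = ![0, -1]
      rw [mulVec22, h0, h2, h]
  · have hw : ((⟨_, hdet⟩ : Matrix.SpecialLinearGroup (Fin 2) ℤ)
        : Matrix (Fin 2) (Fin 2) ℤ).mulVec ![z1, z2] = ![-(a * b), c] := by
      show (!![a * y2, -(a * y1); -x2, x1]).mulVec ![z1, z2] = _
      rw [mulVec22, show a * y2 * z1 + -(a * y1) * z2 = -(a * b) by linear_combination (-a) * hb,
        show -x2 * z1 + x1 * z2 = c by linear_combination hc]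
    have hT : ((transvection (1, 0) ^ 2 : Matrix.SpecialLinearGroup (Fin 2) ℤ)
        : Matrix (Fin 2) (Fin 2) ℤ) = !![1, 2; 0, 1] := by
      rw [Matrix.SpecialLinearGroup.coe_pow]
      norm_num [transvection, pow_two]
    have hmem : transvection (1, 0) ^ 2 ∈
        Subgroup.closure {transvection (1, 0) ^ 2, transvection (0, 1) ^ 2} :=
      Subgroup.subset_closure (Set.mem_insert _ _)
    have key : ∀ v1 v2 : ℤ, (v1 = 1 ∨ v1 = -1) → (v2 = 1 ∨ v2 = -1) →
        ∀ w : Fin 2 → ℤ, w = ![v1, v2] →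
        ∃ h ∈ Subgroup.closure {transvection (1, 0) ^ 2, transvection (0, 1) ^ 2},
          ((h : Matrix.SpecialLinearGroup (Fin 2) ℤ) : Matrix (Fin 2) (Fin 2) ℤ).mulVec w
              = ![1, 1] ∨
          ((h : Matrix.SpecialLinearGroup (Fin 2) ℤ) : Matrix (Fin 2) (Fin 2) ℤ).mulVec w
              = ![-1, -1] := by
      rintro v1 v2 (rfl|rfl) (rfl|rfl) w rfl
      · exact ⟨1, one_mem _, Or.inl (by
          rw [Matrix.SpecialLinearGroup.coe_one, Matrix.one_mulVec])⟩
      · refine ⟨_, hmem, Or.inr ?_⟩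
        rw [hT, mulVec22]; norm_num
      · refine ⟨_, hmem, Or.inl ?_⟩
        rw [hT, mulVec22]; norm_num
      · exact ⟨1, one_mem _, Or.inr (by
          rw [Matrix.SpecialLinearGroup.coe_one, Matrix.one_mulVec])⟩
    have hab : -(a * b) = 1 ∨ -(a * b) = -1 := by
      rcases ha1 with h|h <;> rcases hb1 with h'|h' <;> subst h h' <;> norm_num
    obtain ⟨h, hmem', hh⟩ := key _ _ hab hc1 _ hw
    refine ⟨h, hmem', ?_⟩
    show ((h : Matrix (Fin 2) (Fin 2) ℤ) * !![a * y2, -(a * y1); -x2, x1]).mulVec ![z1, z2] = ![1, 1] ∨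
      ((h : Matrix (Fin 2) (Fin 2) ℤ) * !![a * y2, -(a * y1); -x2, x1]).mulVec ![z1, z2] = ![-1, -1]
    rw [← Matrix.mulVec_mulVec,
      (hw : (!![a * y2, -(a * y1); -x2, x1]).mulVec ![z1, z2] = ![-(a * b), c])]
    rw [hw] at hh
    exact hh
end

section
/- Let G be a group acting on a set X, let I be an index set with at least two elements, let {g_i}_{i∈I} ⊆ G and let {X_i}_{i∈I} be pairwise disjoint nonempty subsets of X such that for every nonzero integer p and all distinct i, j ∈ I, g_i^p(X_j) ⊆ X_i. Then the natural homomorphism from the free group on I to G sending the i-th generator to g_i is injective; i.e., {g_i} freely generate a free subgroup of G. -/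
open Monoid Cardinal Pointwise

/-- The ping pong lemma (possibly infinite index set): if `G` acts on `X`, the sets
`X i` are pairwise disjoint and nonempty, and every nonzero power of `g i` maps `X j`
into `X i` for `i ≠ j`, then the `g i` freely generate a free subgroup of `G`. -/
theorem stmt_19 {G : Type*} [Group G] {X : Type*} [MulAction G X]
    {I : Type*} [Nontrivial I] (g : I → G) (S : I → Set X)
    (hne : ∀ i, (S i).Nonempty)
    (hdisj : ∀ i j, i ≠ j → Disjoint (S i) (S j))
    (hpp : ∀ (p : ℤ), p ≠ 0 → ∀ i j, i ≠ j → ∀ x ∈ S j, (g i ^ p) • x ∈ S i) :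
    Function.Injective (FreeGroup.lift g) := by
  have : FreeGroup.lift g =
      (Monoid.CoprodI.lift fun i => FreeGroup.lift fun _ => g i).comp
        (@freeGroupEquivCoprodI I).toMonoidHom := by
    ext i
    simp
  rw [this, MonoidHom.coe_comp]
  clear this
  refine Function.Injective.comp ?_ (MulEquiv.injective freeGroupEquivCoprodI)
  show Function.Injective (CoprodI.lift fun i : I => FreeGroup.lift fun _ => g i)
  let H : I → Type _ := fun _i => FreeGroup Unit
  let f : ∀ i, H i →* G := fun i => FreeGroup.lift fun _ => g i
  apply CoprodI.lift_injective_of_ping_pong f _ S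
  · exact hne
  · exact fun i j hij => hdisj i j hij
  · show Pairwise fun i j => ∀ h : H i, h ≠ 1 → f i h • S j ⊆ S i
    rintro i j hij
    refine FreeGroup.freeGroupUnitEquivInt.forall_congr_left.mpr ?_
    intro n hne1
    have hnne0 : n ≠ 0 := by
      rintro rfl
      apply hne1
      simp [H, FreeGroup.freeGroupUnitEquivInt]
    change FreeGroup.lift (fun _ => g i) (FreeGroup.of () ^ n) • S j ⊆ S i
    simp only [map_zpow, FreeGroup.lift_apply_of]
    rintro x ⟨y, hy, rfl⟩
    exact hpp n hnne0 i j hij y hy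
  · right
    exact ⟨Classical.arbitrary I, by
      simp only [H]
      exact (Cardinal.nat_lt_aleph0 3).le.trans (Cardinal.infinite_iff.mp inferInstance)⟩
end
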